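/- arXiv:2402.13715 — 5 statements merged into one kernel-verified Lean document; each statement's English description precedes it below -/
import Mathlib

section
/- Fix Δ > 0, R_FEC ∈ (0,1], real numbers W_1,…,W_M, R_u, R_bf, a power budget P_j > 0, set D = (1−R_FEC)·R_u − R_bf, and let η > 0. Define the case-1 (Gibbs) probability vector p*_i = 2^{−ηΔi} / ∑_{i'=1}^M 2^{−ηΔi'}. Assume the two conditions of Lemma 1, case 1: (c1^p) ∑_{i=1}^M (R_FEC·Δ·i − P_j)·2^{−ηΔi} = 0 and (c1^r) ∑_{i=1}^M (R_FEC·W_i − D)·2^{−ηΔi} < 0. Then p* is feasible for the convexified rate-adaptation problem — it satisfies the power equality R_FEC ∑_{i=1}^M Δ·i·p*_i = P_j and the strict rate constraint T(p*) < Φ(p*) − R_bf — and it is optimal: every probability vector q on {1,…,M} satisfying R_FEC ∑_{i=1}^M Δ·i·q_i = P_j and T(q) ≤ Φ(q) − R_bf has T(q) ≤ T(p*). -/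
/-- Gibbs' inequality: for positive `p` and nonnegative `q` with equal sums,
`∑ q log₂ p ≤ ∑ q log₂ q`. -/
lemma gibbs_ineq (s : Finset ℕ) (p q : ℕ → ℝ)
    (hp : ∀ i ∈ s, 0 < p i) (hq : ∀ i ∈ s, 0 ≤ q i)
    (hsum : ∑ i ∈ s, p i = ∑ i ∈ s, q i) :
    ∑ i ∈ s, q i * Real.logb 2 (p i) ≤ ∑ i ∈ s, q i * Real.logb 2 (q i) := by
  have hlog2 : (0:ℝ) < Real.log 2 := Real.log_pos one_lt_two
  have key : ∀ i ∈ s,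
      q i * Real.logb 2 (p i) - q i * Real.logb 2 (q i)
        ≤ (p i - q i) / Real.log 2 := by
    intro i hi
    rcases eq_or_lt_of_le (hq i hi) with h0 | h0
    · rw [← h0]
      simp only [zero_mul, sub_zero]
      exact div_nonneg (by simpa using (hp i hi).le) hlog2.le
    · have hpq : 0 < p i / q i := div_pos (hp i hi) h0
      have h1 : Real.log (p i) - Real.log (q i) ≤ p i / q i - 1 := by
        rw [← Real.log_div (hp i hi).ne' h0.ne']
        exact Real.log_le_sub_one_of_pos hpq
      have h2 : q i * (Real.log (p i) - Real.log (q i)) ≤ p i - q i := by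
        calc q i * (Real.log (p i) - Real.log (q i))
            ≤ q i * (p i / q i - 1) := by
              exact mul_le_mul_of_nonneg_left h1 h0.le
          _ = p i - q i := by field_simp
      calc q i * Real.logb 2 (p i) - q i * Real.logb 2 (q i)
          = (q i * (Real.log (p i) - Real.log (q i))) / Real.log 2 := by
            simp only [Real.logb]; ring
        _ ≤ (p i - q i) / Real.log 2 := by
            exact div_le_div_of_nonneg_right h2 hlog2.le |>.trans_eq rfl
  have hsum2 := Finset.sum_le_sum key
  rw [Finset.sum_sub_distrib] at hsum2
  have h3 : ∑ i ∈ s, (p i - q i) / Real.log 2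
      = (∑ i ∈ s, p i - ∑ i ∈ s, q i) / Real.log 2 := by
    rw [← Finset.sum_div, Finset.sum_sub_distrib]
  rw [h3, hsum, sub_self, zero_div] at hsum2
  linarith

/-- **Lemma 1, case 1 (Gibbs distribution) of the convexified rate-adaptation problem.**
Under the conditions `c1p` (power) and `c1r` (strict rate inequality), the Gibbs
probability vector `pstar i = 2^{-ηΔi} / ∑ 2^{-ηΔi'}` is feasible (power equality and
strict rate constraint) and optimal: any feasible probability vector `q` has
transmission rate `T(q) ≤ T(pstar)`. -/
theorem lemma1_case1_optimal
    (M : ℕ) (hM : 1 ≤ M) (Δ : ℝ) (hΔ : 0 < Δ)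
    (RFEC : ℝ) (hRpos : 0 < RFEC) (hRle : RFEC ≤ 1)
    (W : ℕ → ℝ) (Ru Rbf : ℝ) (Pj : ℝ) (hPj : 0 < Pj)
    (D : ℝ) (hD : D = (1 - RFEC) * Ru - Rbf)
    (η : ℝ) (hη : 0 < η)
    (pstar : ℕ → ℝ)
    (hpstar : ∀ i, pstar i =
      (2 : ℝ) ^ (-(η * Δ * (i : ℝ))) /
        ∑ i' ∈ Finset.Icc 1 M, (2 : ℝ) ^ (-(η * Δ * (i' : ℝ))))
    (hc1p : ∑ i ∈ Finset.Icc 1 M,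
      (RFEC * Δ * (i : ℝ) - Pj) * (2 : ℝ) ^ (-(η * Δ * (i : ℝ))) = 0)
    (hc1r : ∑ i ∈ Finset.Icc 1 M,
      (RFEC * W i - D) * (2 : ℝ) ^ (-(η * Δ * (i : ℝ))) < 0) :
    -- feasibility: power equality
    (RFEC * ∑ i ∈ Finset.Icc 1 M, Δ * (i : ℝ) * pstar i = Pj) ∧
    -- feasibility: strict rate constraint T(pstar) < Φ(pstar) - Rbf
    (-RFEC * ∑ i ∈ Finset.Icc 1 M, pstar i * Real.logb 2 (pstar i)
      < (RFEC * (-(∑ i ∈ Finset.Icc 1 M, pstar i * Real.logb 2 (pstar i))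
          - ∑ i ∈ Finset.Icc 1 M, pstar i * W i) + (1 - RFEC) * Ru) - Rbf) ∧
    -- optimality among all feasible probability vectors
    (∀ q : ℕ → ℝ,
      (∀ i ∈ Finset.Icc 1 M, 0 ≤ q i) →
      (∑ i ∈ Finset.Icc 1 M, q i = 1) →
      (RFEC * ∑ i ∈ Finset.Icc 1 M, Δ * (i : ℝ) * q i = Pj) →
      (-RFEC * ∑ i ∈ Finset.Icc 1 M, q i * Real.logb 2 (q i)
        ≤ (RFEC * (-(∑ i ∈ Finset.Icc 1 M, q i * Real.logb 2 (q i))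
            - ∑ i ∈ Finset.Icc 1 M, q i * W i) + (1 - RFEC) * Ru) - Rbf) →
      -RFEC * ∑ i ∈ Finset.Icc 1 M, q i * Real.logb 2 (q i)
        ≤ -RFEC * ∑ i ∈ Finset.Icc 1 M, pstar i * Real.logb 2 (pstar i)) := by
  classical
  set s := Finset.Icc 1 M with hs
  set t : ℕ → ℝ := fun i => (2 : ℝ) ^ (-(η * Δ * (i : ℝ))) with ht
  set S : ℝ := ∑ i ∈ s, t i with hS
  have htpos : ∀ i, 0 < t i := fun i => Real.rpow_pos_of_pos two_pos _
  have hne : s.Nonempty := Finset.nonempty_Icc.mpr hM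
  have hSpos : 0 < S := Finset.sum_pos (fun i _ => htpos i) hne
  have hppos : ∀ i, 0 < pstar i := fun i => by
    rw [hpstar i]; exact div_pos (htpos i) hSpos
  have hpsum : ∑ i ∈ s, pstar i = 1 := by
    have : ∑ i ∈ s, pstar i = S / S := by
      rw [Finset.sum_div]
      exact Finset.sum_congr rfl fun i _ => hpstar i
    rw [this, div_self hSpos.ne']
  -- power equality for pstar
  have hpow : RFEC * ∑ i ∈ s, Δ * (i : ℝ) * pstar i = Pj := by
    have h1 : RFEC * ∑ i ∈ s, Δ * (i : ℝ) * t i = Pj * S := by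
      have := hc1p
      rw [hS, Finset.mul_sum, Finset.mul_sum]
      have expand : ∑ i ∈ s, (RFEC * Δ * (i : ℝ) - Pj) * t i
          = ∑ i ∈ s, (RFEC * (Δ * (i : ℝ) * t i)) - ∑ i ∈ s, Pj * t i := by
        rw [← Finset.sum_sub_distrib]
        exact Finset.sum_congr rfl fun i _ => by ring
      rw [expand] at this
      linarith [this]
    have h2 : ∑ i ∈ s, Δ * (i : ℝ) * pstar i
        = (∑ i ∈ s, Δ * (i : ℝ) * t i) / S := by
      rw [Finset.sum_div]
      exact Finset.sum_congr rfl fun i _ => by rw [hpstar i]; ring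
    rw [h2, mul_div_assoc'] at *
    rw [h1, mul_div_assoc, div_self hSpos.ne', mul_one]
  -- log of pstar
  have hlogp : ∀ i, Real.logb 2 (pstar i)
      = -(η * Δ * (i : ℝ)) - Real.logb 2 S := by
    intro i
    rw [hpstar i, Real.logb_div (htpos i).ne' hSpos.ne',
      Real.logb_rpow two_pos (by norm_num)]
  -- key sum computation
  have hsum_logp : ∀ r : ℕ → ℝ, ∑ i ∈ s, r i * Real.logb 2 (pstar i)
      = -η * (∑ i ∈ s, Δ * (i : ℝ) * r i) - Real.logb 2 S * ∑ i ∈ s, r i := by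
    intro r
    have : ∀ i ∈ s, r i * Real.logb 2 (pstar i)
        = -η * (Δ * (i : ℝ) * r i) - Real.logb 2 S * r i := by
      intro i _; rw [hlogp i]; ring
    rw [Finset.sum_congr rfl this, Finset.sum_sub_distrib,
      ← Finset.mul_sum, ← Finset.mul_sum]
  refine ⟨hpow, ?_, ?_⟩
  · -- strict rate constraint
    have h1 : RFEC * ∑ i ∈ s, W i * t i < D * S := by
      have expand : ∑ i ∈ s, (RFEC * W i - D) * t i
          = RFEC * ∑ i ∈ s, W i * t i - D * S := by
        rw [hS, Finset.mul_sum, Finset.mul_sum, ← Finset.sum_sub_distrib]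
        exact Finset.sum_congr rfl fun i _ => by ring
      rw [expand] at hc1r
      linarith
    have h2 : ∑ i ∈ s, pstar i * W i = (∑ i ∈ s, W i * t i) / S := by
      rw [Finset.sum_div]
      exact Finset.sum_congr rfl fun i _ => by rw [hpstar i]; ring
    have h3 : RFEC * ∑ i ∈ s, pstar i * W i < D := by
      rw [h2, mul_div_assoc']
      rw [div_lt_iff₀ hSpos]
      linarith [h1]
    rw [hD] at h3
    nlinarith [h3]
  · -- optimality
    intro q hq0 hq1 hqpow _
    have hmom : ∑ i ∈ s, Δ * (i : ℝ) * q i = ∑ i ∈ s, Δ * (i : ℝ) * pstar i :=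
      mul_left_cancel₀ hRpos.ne' (by rw [hqpow, hpow])
    have hgibbs := gibbs_ineq s pstar q (fun i _ => hppos i)
      hq0 (by rw [hpsum, hq1])
    have hq_logp := hsum_logp q
    have hp_logp := hsum_logp pstar
    rw [hmom] at hq_logp
    rw [hq1] at hq_logp
    rw [hpsum] at hp_logp
    have : ∑ i ∈ s, pstar i * Real.logb 2 (pstar i)
        ≤ ∑ i ∈ s, q i * Real.logb 2 (q i) := by
      calc ∑ i ∈ s, pstar i * Real.logb 2 (pstar i)
          = ∑ i ∈ s, q i * Real.logb 2 (pstar i) := by rw [hq_logp, hp_logp]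
        _ ≤ ∑ i ∈ s, q i * Real.logb 2 (q i) := hgibbs
    nlinarith [this]
end

section
/- Fix Δ > 0, R_FEC ∈ (0,1], real numbers W_1,…,W_M, R_u, R_bf, a power budget P_j > 0, set D = (1−R_FEC)·R_u − R_bf, and let η > 0 and τ > 0. Define the case-2 (tilted Gibbs) probability vector p*_i = 2^{−ηΔi − τW_i} / ∑_{i'=1}^M 2^{−ηΔi' − τW_{i'}}. Assume the two conditions of Lemma 1, case 2: (c2^p) ∑_{i=1}^M (R_FEC·Δ·i − P_j)·2^{−ηΔi − τW_i} = 0 and (c2^r) ∑_{i=1}^M (R_FEC·W_i − D)·2^{−ηΔi − τW_i} = 0. Then p* is feasible for the convexified rate-adaptation problem — it satisfies the power equality R_FEC ∑_{i=1}^M Δ·i·p*_i = P_j and the rate constraint with equality T(p*) = Φ(p*) − R_bf — and it is optimal: every probability vector q on {1,…,M} satisfying R_FEC ∑_{i=1}^M Δ·i·q_i = P_j and T(q) ≤ Φ(q) − R_bf has T(q) ≤ T(p*). -/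
/-- Gibbs inequality (pointwise, natural log). -/
lemma gibbs_pointwise {p q : ℝ} (hp : 0 < p) (hq : 0 ≤ q) :
    q * Real.log p ≤ q * Real.log q + (p - q) := by
  rcases eq_or_lt_of_le hq with h | h
  · simp [← h, hp.le]
  · have hpq : 0 < p / q := div_pos hp h
    have := Real.log_le_sub_one_of_pos hpq
    rw [Real.log_div hp.ne' h.ne'] at this
    have := mul_le_mul_of_nonneg_left this hq
    rw [mul_sub] at this
    have hc : q * (p / q - 1) = p - q := by field_simp
    nlinarith

/-- Gibbs inequality for `logb 2` on a finite sum. -/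
lemma gibbs_sum (s : Finset ℕ) (p q : ℕ → ℝ) (hp : ∀ i ∈ s, 0 < p i)
    (hq : ∀ i ∈ s, 0 ≤ q i) (hqs : ∑ i ∈ s, q i = 1) (hps : ∑ i ∈ s, p i = 1) :
    ∑ i ∈ s, q i * Real.logb 2 (p i) ≤ ∑ i ∈ s, q i * Real.logb 2 (q i) := by
  have hlog : ∑ i ∈ s, q i * Real.log (p i)
      ≤ ∑ i ∈ s, q i * Real.log (q i) := by
    have h := Finset.sum_le_sum (fun i hi => gibbs_pointwise (hp i hi) (hq i hi))
    rw [Finset.sum_add_distrib, Finset.sum_sub_distrib, hqs, hps] at h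
    linarith
  have h2 : (0:ℝ) < Real.log 2 := Real.log_pos (by norm_num)
  simp only [Real.logb, div_eq_mul_inv, ← mul_assoc, ← Finset.sum_mul]
  exact mul_le_mul_of_nonneg_right hlog (inv_nonneg.mpr h2.le)

/-- **Lemma 1, case 2 (tilted Gibbs distribution) of the convexified rate-adaptation
problem.** Under the conditions `c2p` (power) and `c2r` (rate equality), the tilted Gibbs
probability vector `pstar i = 2^{-ηΔi - τW_i} / ∑ 2^{-ηΔi' - τW_{i'}}` is feasible
(power equality and the rate constraint holds with equality) and optimal: any feasible
probability vector `q` has transmission rate `T(q) ≤ T(pstar)`. -/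
theorem lemma1_case2_optimal
    (M : ℕ) (hM : 1 ≤ M) (Δ : ℝ) (hΔ : 0 < Δ)
    (RFEC : ℝ) (hRpos : 0 < RFEC) (hRle : RFEC ≤ 1)
    (W : ℕ → ℝ) (Ru Rbf : ℝ) (Pj : ℝ) (hPj : 0 < Pj)
    (D : ℝ) (hD : D = (1 - RFEC) * Ru - Rbf)
    (η : ℝ) (hη : 0 < η) (τ : ℝ) (hτ : 0 < τ)
    (pstar : ℕ → ℝ)
    (hpstar : ∀ i, pstar i =
      (2 : ℝ) ^ (-(η * Δ * (i : ℝ)) - τ * W i) /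
        ∑ i' ∈ Finset.Icc 1 M, (2 : ℝ) ^ (-(η * Δ * (i' : ℝ)) - τ * W i'))
    (hc2p : ∑ i ∈ Finset.Icc 1 M,
      (RFEC * Δ * (i : ℝ) - Pj) * (2 : ℝ) ^ (-(η * Δ * (i : ℝ)) - τ * W i) = 0)
    (hc2r : ∑ i ∈ Finset.Icc 1 M,
      (RFEC * W i - D) * (2 : ℝ) ^ (-(η * Δ * (i : ℝ)) - τ * W i) = 0) :
    -- feasibility: power equality
    (RFEC * ∑ i ∈ Finset.Icc 1 M, Δ * (i : ℝ) * pstar i = Pj) ∧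
    -- feasibility: rate constraint holds with equality, T(pstar) = Φ(pstar) - Rbf
    (-RFEC * ∑ i ∈ Finset.Icc 1 M, pstar i * Real.logb 2 (pstar i)
      = (RFEC * (-(∑ i ∈ Finset.Icc 1 M, pstar i * Real.logb 2 (pstar i))
          - ∑ i ∈ Finset.Icc 1 M, pstar i * W i) + (1 - RFEC) * Ru) - Rbf) ∧
    -- optimality among all feasible probability vectors
    (∀ q : ℕ → ℝ,
      (∀ i ∈ Finset.Icc 1 M, 0 ≤ q i) →
      (∑ i ∈ Finset.Icc 1 M, q i = 1) →
      (RFEC * ∑ i ∈ Finset.Icc 1 M, Δ * (i : ℝ) * q i = Pj) →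
      (-RFEC * ∑ i ∈ Finset.Icc 1 M, q i * Real.logb 2 (q i)
        ≤ (RFEC * (-(∑ i ∈ Finset.Icc 1 M, q i * Real.logb 2 (q i))
            - ∑ i ∈ Finset.Icc 1 M, q i * W i) + (1 - RFEC) * Ru) - Rbf) →
      -RFEC * ∑ i ∈ Finset.Icc 1 M, q i * Real.logb 2 (q i)
        ≤ -RFEC * ∑ i ∈ Finset.Icc 1 M, pstar i * Real.logb 2 (pstar i)) := by
  set s : Finset ℕ := Finset.Icc 1 M with hs
  set g : ℕ → ℝ := fun i => (2 : ℝ) ^ (-(η * Δ * (i : ℝ)) - τ * W i) with hg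
  have hgpos : ∀ i, 0 < g i := fun i => Real.rpow_pos_of_pos (by norm_num) _
  set Z : ℝ := ∑ i ∈ s, g i with hZ
  have hsne : s.Nonempty := ⟨1, by simp [hs, hM]⟩
  have hZpos : 0 < Z := Finset.sum_pos (fun i _ => hgpos i) hsne
  -- pstar positivity and sum
  have hppos : ∀ i, 0 < pstar i := fun i => by
    rw [hpstar i]; exact div_pos (hgpos i) hZpos
  have hpsum : ∑ i ∈ s, pstar i = 1 := by
    simp only [hpstar]
    rw [← Finset.sum_div]
    exact div_self hZpos.ne'
  -- power equality for pstar
  have hpow : RFEC * ∑ i ∈ s, Δ * (i : ℝ) * pstar i = Pj := by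
    have h1 : ∑ i ∈ s, (RFEC * Δ * (i : ℝ)) * g i = Pj * Z := by
      have := hc2p
      simp only [sub_mul, Finset.sum_sub_distrib] at this
      rw [hZ, Finset.mul_sum]
      linarith [this]
    simp only [hpstar]
    rw [Finset.mul_sum]
    have : ∀ i ∈ s, RFEC * (Δ * (i : ℝ) * (g i / Z)) = (RFEC * Δ * (i : ℝ)) * g i / Z := by
      intro i _; ring
    rw [Finset.sum_congr rfl this, ← Finset.sum_div, h1]
    field_simp
  -- rate identity for pstar
  have hrate : RFEC * ∑ i ∈ s, pstar i * W i = D := by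
    have h1 : ∑ i ∈ s, (RFEC * W i) * g i = D * Z := by
      have := hc2r
      simp only [sub_mul, Finset.sum_sub_distrib] at this
      rw [hZ, Finset.mul_sum]
      linarith [this]
    simp only [hpstar]
    rw [Finset.mul_sum]
    have : ∀ i ∈ s, RFEC * (g i / Z * W i) = (RFEC * W i) * g i / Z := by
      intro i _; ring
    rw [Finset.sum_congr rfl this, ← Finset.sum_div, h1]
    field_simp
  refine ⟨hpow, by rw [hD] at hrate; linarith, ?_⟩
  -- optimality
  intro q hq0 hq1 hqpow hqrate
  set Sq := ∑ i ∈ s, q i * Real.logb 2 (q i) with hSq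
  set Sp := ∑ i ∈ s, pstar i * Real.logb 2 (pstar i) with hSp
  -- from the rate constraint: RFEC * ∑ q W ≤ D
  have hqW : RFEC * ∑ i ∈ s, q i * W i ≤ D := by
    have : RFEC * (-Sq - ∑ i ∈ s, q i * W i)
        = -RFEC * Sq - RFEC * ∑ i ∈ s, q i * W i := by ring
    rw [this] at hqrate
    rw [hD]; linarith
  -- logb of pstar
  have hlogp : ∀ i, Real.logb 2 (pstar i)
      = (-(η * Δ * (i : ℝ)) - τ * W i) - Real.logb 2 Z := by
    intro i
    rw [hpstar i, Real.logb_div (hgpos i).ne' hZpos.ne',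
      Real.logb_rpow (by norm_num) (by norm_num)]
  -- key expansion: for any r with the needed sums
  have hexp : ∀ r : ℕ → ℝ, (∑ i ∈ s, r i = 1) →
      ∑ i ∈ s, r i * Real.logb 2 (pstar i)
        = -η * ∑ i ∈ s, Δ * (i : ℝ) * r i - τ * ∑ i ∈ s, r i * W i
          - Real.logb 2 Z := by
    intro r hr
    have : ∀ i ∈ s, r i * Real.logb 2 (pstar i)
        = -η * (Δ * (i : ℝ) * r i) - τ * (r i * W i) - Real.logb 2 Z * r i := by
      intro i _
      rw [hlogp i]; ring
    rw [Finset.sum_congr rfl this]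
    simp only [Finset.sum_sub_distrib, ← Finset.mul_sum, hr]
    ring
  -- Gibbs
  have hgibbs : ∑ i ∈ s, q i * Real.logb 2 (pstar i) ≤ Sq :=
    gibbs_sum s pstar q (fun i _ => hppos i) hq0 hq1 hpsum
  have hq2 : ∑ i ∈ s, q i * Real.logb 2 (pstar i)
      = -η * ∑ i ∈ s, Δ * (i : ℝ) * q i - τ * ∑ i ∈ s, q i * W i
        - Real.logb 2 Z := hexp q hq1
  have hp2 : Sp = -η * ∑ i ∈ s, Δ * (i : ℝ) * pstar i - τ * ∑ i ∈ s, pstar i * W i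
      - Real.logb 2 Z := hexp pstar hpsum
  -- compare linear terms
  have e1 : ∑ i ∈ s, Δ * (i : ℝ) * q i = ∑ i ∈ s, Δ * (i : ℝ) * pstar i := by
    have h1 := hpow
    field_simp at hqpow h1
    linarith [mul_left_cancel₀ hRpos.ne' (hqpow.trans h1.symm)]
  have e2 : ∑ i ∈ s, q i * W i ≤ ∑ i ∈ s, pstar i * W i := by
    nlinarith [hrate, hqW]
  have : -Sq ≤ -Sp := by
    have h3 : ∑ i ∈ s, q i * Real.logb 2 (pstar i) ≥ Sp := by
      rw [hq2, hp2, e1]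
      nlinarith [e2]
    linarith
  nlinarith [this]
end

section
/- Let p and p̂ be probability vectors on {1,…,M} with all entries strictly positive, and let the channel densities f_i and output mixtures f^p, f^{p̂} be as in the context. Define g2(p) = ∑_{i=1}^M p_i ∫ f_i(y)·log( f^p(y) / (f_i(y)·p_i) ) dy and g2'(p,p̂) = ∑_{i=1}^M p_i ∫ f_i(y)·log( f^{p̂}(y) / (f_i(y)·p̂_i) ) dy. Then g2'(p,p̂) − g2(p) = ∑_{i=1}^M p_i·log(p_i / p̂_i) − ∫ f^p(y)·log( f^p(y) / f^{p̂}(y) ) dy, i.e., the surrogate gap equals the relative entropy between p and p̂ minus the relative entropy between the corresponding output mixture densities. -/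
open MeasureTheory

/-- Conditional density of the post-SIC received signal given symbol `i`:
a finite Gaussian mixture over the residual multiuser-interference values `b k`
with weights `w k`, signal points `μ_i = h·α·Δ·i` and noise variance `σ²`. -/
noncomputable def condDensity (σ h α Δ : ℝ) (K : ℕ) (w b : ℕ → ℝ)
    (i : ℕ) (y : ℝ) : ℝ :=
  ∑ k ∈ Finset.Icc 1 K,
    w k * (2 * Real.pi * σ ^ 2) ^ (-(1 / 2 : ℝ)) *
      Real.exp (-(y - h * α * Δ * (i : ℝ) - b k) ^ 2 / (2 * σ ^ 2))

/-- Output mixture density `f^q(y) = ∑ᵢ qᵢ fᵢ(y)`. -/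
noncomputable def outMix (M : ℕ) (f : ℕ → ℝ → ℝ) (q : ℕ → ℝ) (y : ℝ) : ℝ :=
  ∑ i ∈ Finset.Icc 1 M, q i * f i y

/-- `g2Fun M f p q = ∑ᵢ pᵢ ∫ fᵢ(y) log₂( f^q(y) / (fᵢ(y) qᵢ) ) dy`;
`g2Fun M f p p` is `g₂(p)` and `g2Fun M f p p̂` is the surrogate `g₂'(p, p̂)`. -/
noncomputable def g2Fun (M : ℕ) (f : ℕ → ℝ → ℝ) (p q : ℕ → ℝ) : ℝ :=
  ∑ i ∈ Finset.Icc 1 M,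
    p i * ∫ y : ℝ, f i y * Real.logb 2 (outMix M f q y / (f i y * q i))

/-! ### Auxiliary lemmas about shifted Gaussians -/

/-- A shifted (unnormalised) Gaussian kernel. -/
noncomputable def gkAux (β c y : ℝ) : ℝ := Real.exp (-β * (y - c) ^ 2)

lemma gkAux_cont (β c : ℝ) : Continuous (gkAux β c) := by
  unfold gkAux; fun_prop

lemma gkAux_pos (β c y : ℝ) : 0 < gkAux β c y := Real.exp_pos _

lemma gkAux_le_one {β : ℝ} (hβ : 0 ≤ β) (c y : ℝ) : gkAux β c y ≤ 1 := by
  unfold gkAux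
  apply Real.exp_le_one_iff.mpr
  have : 0 ≤ β * (y - c) ^ 2 := by positivity
  linarith

lemma gkAux_int {β : ℝ} (hβ : 0 < β) (c : ℝ) : Integrable (gkAux β c) :=
  (integrable_exp_neg_mul_sq hβ).comp_sub_right c

lemma gkAux_integral {β : ℝ} (hβ : 0 < β) (c : ℝ) :
    ∫ y : ℝ, gkAux β c y = Real.sqrt (Real.pi / β) := by
  unfold gkAux
  rw [integral_sub_right_eq_self (μ := volume) (fun y => Real.exp (-β * y ^ 2)) c]
  exact integral_gaussian β

lemma poly_gkAux_int {β : ℝ} (hβ : 0 < β) (C1 C2 c d : ℝ) :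
    Integrable fun y : ℝ => (C1 + C2 * (y - c) ^ 2) * gkAux β d y := by
  have h2 : Integrable fun x : ℝ => x ^ 2 * Real.exp (-β * x ^ 2) := by
    have := integrable_rpow_mul_exp_neg_mul_sq hβ (s := ((2 : ℕ) : ℝ)) (by norm_num)
    simpa [Real.rpow_natCast] using this
  have h1 : Integrable fun x : ℝ => x * Real.exp (-β * x ^ 2) :=
    integrable_mul_exp_neg_mul_sq hβ
  have h0 : Integrable fun x : ℝ => Real.exp (-β * x ^ 2) := integrable_exp_neg_mul_sq hβ
  have hg : Integrable fun x : ℝ => (C1 + C2 * (x + (d - c)) ^ 2) * Real.exp (-β * x ^ 2) := by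
    have heq : (fun x : ℝ => (C1 + C2 * (x + (d - c)) ^ 2) * Real.exp (-β * x ^ 2))
        = fun x : ℝ => ((C1 + C2 * (d - c) ^ 2) * Real.exp (-β * x ^ 2)
            + (2 * C2 * (d - c)) * (x * Real.exp (-β * x ^ 2)))
            + C2 * (x ^ 2 * Real.exp (-β * x ^ 2)) := by
      funext x; ring
    rw [heq]
    exact ((h0.const_mul _).add (h1.const_mul _)).add (h2.const_mul _)
  have h3 := hg.comp_sub_right d
  have heq2 : (fun y : ℝ => (C1 + C2 * ((y - d) + (d - c)) ^ 2) * Real.exp (-β * (y - d) ^ 2))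
      = fun y : ℝ => (C1 + C2 * (y - c) ^ 2) * gkAux β d y := by
    funext y; unfold gkAux; congr 2; ring
  rw [← heq2]
  exact h3

lemma cont_logb2 {r : ℝ → ℝ} (hr : Continuous r) (hpos : ∀ y, 0 < r y) :
    Continuous fun y => Real.logb 2 (r y) := by
  simp only [Real.logb]
  exact (hr.log fun y => (hpos y).ne').div_const _

lemma logb_sub_logb {a b c d e : ℝ} (ha : 0 < a) (hb : 0 < b) (hc : 0 < c) (hd : 0 < d)
    (he : 0 < e) :
    Real.logb 2 (a / (c * d)) - Real.logb 2 (b / (c * e))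
      = Real.logb 2 (a / b) + Real.logb 2 (e / d) := by
  rw [Real.logb_div ha.ne' (by positivity), Real.logb_div hb.ne' (by positivity),
    Real.logb_div ha.ne' hb.ne', Real.logb_div he.ne' hd.ne',
    Real.logb_mul hc.ne' hd.ne', Real.logb_mul hc.ne' he.ne']
  ring

lemma logb2_gkAux (β c y : ℝ) :
    Real.logb 2 (gkAux β c y) = (-β * (y - c) ^ 2) / Real.log 2 := by
  unfold gkAux
  rw [Real.logb, Real.log_exp]

/-- **Surrogate-gap identity.** The gap `g₂'(p, p̂) - g₂(p)` equals the relative entropy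
between `p` and `p̂` minus the relative entropy between the corresponding output
mixture densities. -/
theorem surrogate_gap_identity
    (M : ℕ) (hM : 1 ≤ M) (σ h α Δ : ℝ)
    (hσ : 0 < σ) (hh : 0 < h) (hα : 0 < α) (hΔ : 0 < Δ)
    (K : ℕ) (hK : 1 ≤ K) (w b : ℕ → ℝ)
    (hw : ∀ k ∈ Finset.Icc 1 K, 0 ≤ w k)
    (hwsum : ∑ k ∈ Finset.Icc 1 K, w k = 1)
    (p phat : ℕ → ℝ)
    (hp : ∀ i ∈ Finset.Icc 1 M, 0 < p i)
    (hpsum : ∑ i ∈ Finset.Icc 1 M, p i = 1)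
    (hphat : ∀ i ∈ Finset.Icc 1 M, 0 < phat i)
    (hphatsum : ∑ i ∈ Finset.Icc 1 M, phat i = 1)
    (f : ℕ → ℝ → ℝ) (hf : f = condDensity σ h α Δ K w b) :
    g2Fun M f p phat - g2Fun M f p p
      = (∑ i ∈ Finset.Icc 1 M, p i * Real.logb 2 (p i / phat i))
        - ∫ y : ℝ,
            outMix M f p y * Real.logb 2 (outMix M f p y / outMix M f phat y) := by
  subst hf
  set F := condDensity σ h α Δ K w b with hFdef
  have hσ2 : (0 : ℝ) < σ ^ 2 := by positivity
  obtain ⟨β, hβdef⟩ : ∃ β : ℝ, β = (2 * σ ^ 2)⁻¹ := ⟨_, rfl⟩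
  have hβ : 0 < β := by rw [hβdef]; positivity
  obtain ⟨N, hNdef⟩ : ∃ N : ℝ, N = (2 * Real.pi * σ ^ 2) ^ (-(1 / 2 : ℝ)) := ⟨_, rfl⟩
  have hN : 0 < N := by
    rw [hNdef]; exact Real.rpow_pos_of_pos (by positivity) _
  have hNint : N * Real.sqrt (Real.pi / β) = 1 := by
    have hA : (0 : ℝ) < 2 * Real.pi * σ ^ 2 := by positivity
    have h1 : Real.pi / β = 2 * Real.pi * σ ^ 2 := by
      rw [hβdef]; field_simp
    rw [hNdef, h1, Real.sqrt_eq_rpow, ← Real.rpow_add hA]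
    norm_num
  obtain ⟨cc, hccdef⟩ : ∃ cc : ℕ → ℕ → ℝ, cc = fun (i k : ℕ) => h * α * Δ * (i : ℝ) + b k := ⟨_, rfl⟩
  have hccval : ∀ i k, cc i k = h * α * Δ * (i : ℝ) + b k := fun i k => by rw [hccdef]
  -- pointwise description of the conditional densities
  have hFeq : ∀ i y, F i y = ∑ k ∈ Finset.Icc 1 K, w k * N * gkAux β (cc i k) y := by
    intro i y
    rw [hFdef]
    unfold condDensity gkAux
    refine Finset.sum_congr rfl fun k _ => ?_
    rw [hNdef, hccval, hβdef]
    have hE : -(y - h * α * Δ * (i : ℝ) - b k) ^ 2 / (2 * σ ^ 2)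
        = -(2 * σ ^ 2)⁻¹ * (y - (h * α * Δ * (i : ℝ) + b k)) ^ 2 := by ring
    rw [hE]
  -- a strictly positive mixture weight
  obtain ⟨k0, hk0m, hk0⟩ : ∃ k ∈ Finset.Icc 1 K, 0 < w k := by
    by_contra hc
    push_neg at hc
    have hz : ∑ k ∈ Finset.Icc 1 K, w k = 0 :=
      Finset.sum_eq_zero fun k hk => le_antisymm (hc k hk) (hw k hk)
    rw [hwsum] at hz; norm_num at hz
  -- basic facts about the conditional densities
  have hFcont : ∀ i, Continuous (F i) := by
    intro i
    have hEq : F i = fun y => ∑ k ∈ Finset.Icc 1 K, w k * N * gkAux β (cc i k) y :=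
      funext (hFeq i)
    rw [hEq]
    exact continuous_finset_sum _ fun k _ => continuous_const.mul (gkAux_cont β (cc i k))
  have hFpos : ∀ i y, 0 < F i y := by
    intro i y
    rw [hFeq]
    exact Finset.sum_pos'
      (fun k hk => mul_nonneg (mul_nonneg (hw k hk) hN.le) (gkAux_pos _ _ _).le)
      ⟨k0, hk0m, mul_pos (mul_pos hk0 hN) (gkAux_pos _ _ _)⟩
  have hFle : ∀ i y, F i y ≤ N := by
    intro i y
    rw [hFeq]
    calc ∑ k ∈ Finset.Icc 1 K, w k * N * gkAux β (cc i k) y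
        ≤ ∑ k ∈ Finset.Icc 1 K, w k * N := by
          refine Finset.sum_le_sum fun k hk => ?_
          have h1 : 0 ≤ w k * N := mul_nonneg (hw k hk) hN.le
          calc w k * N * gkAux β (cc i k) y
              ≤ w k * N * 1 := mul_le_mul_of_nonneg_left (gkAux_le_one hβ.le _ _) h1
            _ = w k * N := mul_one _
      _ = N := by rw [← Finset.sum_mul, hwsum, one_mul]
  have hFlb : ∀ i y, w k0 * N * gkAux β (cc i k0) y ≤ F i y := by
    intro i y
    rw [hFeq]
    exact Finset.single_le_sum
      (fun k hk => mul_nonneg (mul_nonneg (hw k hk) hN.le) (gkAux_pos _ _ _).le) hk0m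
  have hFint : ∀ i, Integrable (F i) := by
    intro i
    have hEq : F i = fun y => ∑ k ∈ Finset.Icc 1 K, w k * N * gkAux β (cc i k) y :=
      funext (hFeq i)
    rw [hEq]
    exact integrable_finset_sum _ fun k _ => (gkAux_int hβ _).const_mul _
  have hFone : ∀ i, ∫ y : ℝ, F i y = 1 := by
    intro i
    have hEq : (fun y => F i y) = fun y => ∑ k ∈ Finset.Icc 1 K, w k * N * gkAux β (cc i k) y :=
      funext (hFeq i)
    rw [hEq, integral_finset_sum _ fun k _ => (gkAux_int hβ _).const_mul _]
    calc ∑ k ∈ Finset.Icc 1 K, ∫ y : ℝ, w k * N * gkAux β (cc i k) y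
        = ∑ k ∈ Finset.Icc 1 K, w k := by
          refine Finset.sum_congr rfl fun k _ => ?_
          rw [integral_const_mul, gkAux_integral hβ, mul_assoc, hNint, mul_one]
      _ = 1 := hwsum
  -- basic facts about output mixtures
  have h1M : 1 ∈ Finset.Icc 1 M := Finset.mem_Icc.mpr ⟨le_refl 1, hM⟩
  have hmixpos : ∀ (q : ℕ → ℝ), (∀ i ∈ Finset.Icc 1 M, 0 < q i) →
      ∀ y, 0 < outMix M F q y := by
    intro q hq y
    exact Finset.sum_pos' (fun j hj => mul_nonneg (hq j hj).le (hFpos j y).le)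
      ⟨1, h1M, mul_pos (hq 1 h1M) (hFpos 1 y)⟩
  have hmixle : ∀ (q : ℕ → ℝ), (∀ i ∈ Finset.Icc 1 M, 0 < q i) →
      (∑ i ∈ Finset.Icc 1 M, q i = 1) → ∀ y, outMix M F q y ≤ N := by
    intro q hq hqs y
    calc outMix M F q y ≤ ∑ j ∈ Finset.Icc 1 M, q j * N :=
          Finset.sum_le_sum fun j hj => mul_le_mul_of_nonneg_left (hFle j y) (hq j hj).le
      _ = N := by rw [← Finset.sum_mul, hqs, one_mul]
  have hmixge : ∀ (q : ℕ → ℝ), (∀ i ∈ Finset.Icc 1 M, 0 < q i) →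
      ∀ i ∈ Finset.Icc 1 M, ∀ y, q i * F i y ≤ outMix M F q y := by
    intro q hq i hi y
    exact Finset.single_le_sum (fun j hj => mul_nonneg (hq j hj).le (hFpos j y).le) hi
  have hmixcont : ∀ q : ℕ → ℝ, Continuous (outMix M F q) := by
    intro q
    show Continuous fun y => ∑ i ∈ Finset.Icc 1 M, q i * F i y
    exact continuous_finset_sum _ fun j _ => continuous_const.mul (hFcont j)
  -- the main integrability statement
  have hIntL : ∀ (q : ℕ → ℝ) (hq : ∀ i ∈ Finset.Icc 1 M, 0 < q i)
      (hqs : ∑ i ∈ Finset.Icc 1 M, q i = 1), ∀ i ∈ Finset.Icc 1 M,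
      Integrable fun y => F i y * Real.logb 2 (outMix M F q y / (F i y * q i)) := by
    intro q hq hqs i hi
    have hqi := hq i hi
    have hrcont : Continuous fun y => outMix M F q y / (F i y * q i) :=
      (hmixcont q).div ((hFcont i).mul continuous_const)
        (fun y => (mul_pos (hFpos i y) hqi).ne')
    have hrpos : ∀ y, 0 < outMix M F q y / (F i y * q i) := fun y =>
      div_pos (hmixpos q hq y) (mul_pos (hFpos i y) hqi)
    have hcont : Continuous fun y => F i y * Real.logb 2 (outMix M F q y / (F i y * q i)) :=
      (hFcont i).mul (cont_logb2 hrcont hrpos)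
    have hL0 : ∀ y, 0 ≤ Real.logb 2 (outMix M F q y / (F i y * q i)) := by
      intro y
      apply Real.logb_nonneg one_lt_two
      rw [le_div_iff₀ (mul_pos (hFpos i y) hqi)]
      calc (1 : ℝ) * (F i y * q i) = q i * F i y := by ring
        _ ≤ outMix M F q y := hmixge q hq i hi y
    set C1 := Real.logb 2 (1 / (q i * w k0)) with hC1
    set C2 := β / Real.log 2 with hC2
    have hLle : ∀ y, Real.logb 2 (outMix M F q y / (F i y * q i))
        ≤ C1 + C2 * (y - cc i k0) ^ 2 := by
      intro y
      have hgk := gkAux_pos β (cc i k0) y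
      have hub : outMix M F q y / (F i y * q i)
          ≤ (1 / (q i * w k0)) * (gkAux β (cc i k0) y)⁻¹ := by
        have hdpos : 0 < w k0 * N * gkAux β (cc i k0) y * q i :=
          mul_pos (mul_pos (mul_pos hk0 hN) hgk) hqi
        calc outMix M F q y / (F i y * q i)
            ≤ N / (w k0 * N * gkAux β (cc i k0) y * q i) := by
              refine div_le_div₀ hN.le (hmixle q hq hqs y) hdpos ?_
              exact mul_le_mul_of_nonneg_right (hFlb i y) hqi.le
          _ = (1 / (q i * w k0)) * (gkAux β (cc i k0) y)⁻¹ := by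
              field_simp
        -- done
      have hRle := Real.logb_le_logb_of_le one_lt_two (hrpos y) hub
      have h1ne : (1 / (q i * w k0) : ℝ) ≠ 0 := (one_div_pos.mpr (mul_pos hqi hk0)).ne'
      have h2ne : ((gkAux β (cc i k0) y)⁻¹ : ℝ) ≠ 0 := (inv_pos.mpr hgk).ne'
      calc Real.logb 2 (outMix M F q y / (F i y * q i))
          ≤ Real.logb 2 ((1 / (q i * w k0)) * (gkAux β (cc i k0) y)⁻¹) := hRle
        _ = C1 + C2 * (y - cc i k0) ^ 2 := by
            rw [Real.logb_mul h1ne h2ne, Real.logb_inv, logb2_gkAux, hC1, hC2]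
            ring
    have hgint : Integrable fun y => (C1 + C2 * (y - cc i k0) ^ 2) * F i y := by
      have heq : (fun y => (C1 + C2 * (y - cc i k0) ^ 2) * F i y)
          = fun y => ∑ k ∈ Finset.Icc 1 K,
              (w k * N) * ((C1 + C2 * (y - cc i k0) ^ 2) * gkAux β (cc i k) y) := by
        funext y
        rw [hFeq, Finset.mul_sum]
        exact Finset.sum_congr rfl fun k _ => by ring
      rw [heq]
      exact integrable_finset_sum _ fun k _ => (poly_gkAux_int hβ C1 C2 _ _).const_mul _
    refine hgint.mono' hcont.aestronglyMeasurable (ae_of_all _ fun y => ?_)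
    have hnn : 0 ≤ F i y * Real.logb 2 (outMix M F q y / (F i y * q i)) :=
      mul_nonneg (hFpos i y).le (hL0 y)
    rw [Real.norm_eq_abs, abs_of_nonneg hnn]
    calc F i y * Real.logb 2 (outMix M F q y / (F i y * q i))
        ≤ F i y * (C1 + C2 * (y - cc i k0) ^ 2) :=
          mul_le_mul_of_nonneg_left (hLle y) (hFpos i y).le
      _ = (C1 + C2 * (y - cc i k0) ^ 2) * F i y := mul_comm _ _
  have hIntP := hIntL p hp hpsum
  have hIntPh := hIntL phat hphat hphatsum
  have hInt3 : ∀ i ∈ Finset.Icc 1 M,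
      Integrable fun y => F i y * Real.logb 2 (outMix M F phat y / outMix M F p y) := by
    intro i hi
    have heq : (fun y => F i y * Real.logb 2 (outMix M F phat y / outMix M F p y))
        = fun y => (F i y * Real.logb 2 (outMix M F phat y / (F i y * phat i))
            - F i y * Real.logb 2 (outMix M F p y / (F i y * p i)))
            - Real.logb 2 (p i / phat i) * F i y := by
      funext y
      have hl := logb_sub_logb (hmixpos phat hphat y) (hmixpos p hp y) (hFpos i y)
        (hphat i hi) (hp i hi)
      linear_combination (-(F i y)) * hl
    rw [heq]
    exact ((hIntPh i hi).sub (hIntP i hi)).sub ((hFint i).const_mul _)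
  have hkey : ∀ i ∈ Finset.Icc 1 M,
      (∫ y : ℝ, F i y * Real.logb 2 (outMix M F phat y / (F i y * phat i)))
        - ∫ y : ℝ, F i y * Real.logb 2 (outMix M F p y / (F i y * p i))
      = (∫ y : ℝ, F i y * Real.logb 2 (outMix M F phat y / outMix M F p y))
          + Real.logb 2 (p i / phat i) := by
    intro i hi
    rw [← integral_sub (hIntPh i hi) (hIntP i hi)]
    have heq : (fun y => F i y * Real.logb 2 (outMix M F phat y / (F i y * phat i))
        - F i y * Real.logb 2 (outMix M F p y / (F i y * p i)))
        = fun y => F i y * Real.logb 2 (outMix M F phat y / outMix M F p y)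
            + Real.logb 2 (p i / phat i) * F i y := by
      funext y
      have hl := logb_sub_logb (hmixpos phat hphat y) (hmixpos p hp y) (hFpos i y)
        (hphat i hi) (hp i hi)
      linear_combination (F i y) * hl
    rw [heq, integral_add (hInt3 i hi) ((hFint i).const_mul _), integral_const_mul,
      hFone i, mul_one]
  -- assembling everything
  unfold g2Fun
  rw [← Finset.sum_sub_distrib]
  have hstep1 : ∑ i ∈ Finset.Icc 1 M,
      ((p i * ∫ y : ℝ, F i y * Real.logb 2 (outMix M F phat y / (F i y * phat i)))
        - p i * ∫ y : ℝ, F i y * Real.logb 2 (outMix M F p y / (F i y * p i)))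
      = ∑ i ∈ Finset.Icc 1 M, (p i * Real.logb 2 (p i / phat i)
          + p i * ∫ y : ℝ, F i y * Real.logb 2 (outMix M F phat y / outMix M F p y)) := by
    refine Finset.sum_congr rfl fun i hi => ?_
    rw [← mul_sub, hkey i hi]
    ring
  rw [hstep1, Finset.sum_add_distrib]
  have hstep2 : ∑ i ∈ Finset.Icc 1 M,
      p i * ∫ y : ℝ, F i y * Real.logb 2 (outMix M F phat y / outMix M F p y)
      = ∫ y : ℝ, outMix M F p y * Real.logb 2 (outMix M F phat y / outMix M F p y) := by
    have h1 : ∀ i ∈ Finset.Icc 1 M,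
        p i * ∫ y : ℝ, F i y * Real.logb 2 (outMix M F phat y / outMix M F p y)
        = ∫ y : ℝ, p i * (F i y * Real.logb 2 (outMix M F phat y / outMix M F p y)) :=
      fun i hi => (integral_const_mul _ _).symm
    rw [Finset.sum_congr rfl h1,
      ← integral_finset_sum _ (fun i hi => (hInt3 i hi).const_mul _)]
    congr 1
    funext y
    show ∑ i ∈ Finset.Icc 1 M, p i * (F i y * Real.logb 2 (outMix M F phat y / outMix M F p y))
      = (∑ i ∈ Finset.Icc 1 M, p i * F i y) * Real.logb 2 (outMix M F phat y / outMix M F p y)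
    rw [Finset.sum_mul]
    exact Finset.sum_congr rfl fun i _ => (mul_assoc _ _ _).symm
  have hstep3 : ∫ y : ℝ, outMix M F p y * Real.logb 2 (outMix M F phat y / outMix M F p y)
      = - ∫ y : ℝ, outMix M F p y * Real.logb 2 (outMix M F p y / outMix M F phat y) := by
    rw [← integral_neg]
    congr 1
    funext y
    rw [show outMix M F phat y / outMix M F p y = (outMix M F p y / outMix M F phat y)⁻¹ from
      (inv_div _ _).symm, Real.logb_inv]
    ring
  rw [hstep2, hstep3]
  ring
end

section
/- Let p and p̂ be probability vectors on {1,…,M} with all entries strictly positive, and let the channel densities f_i and output mixtures f^p, f^{p̂} be as in the context. Define g2(p) = ∑_{i=1}^M p_i ∫ f_i(y)·log( f^p(y) / (f_i(y)·p_i) ) dy and g2'(p,p̂) = ∑_{i=1}^M p_i ∫ f_i(y)·log( f^{p̂}(y) / (f_i(y)·p̂_i) ) dy. Then g2'(p,p̂) ≥ g2(p); in particular the surrogate function Φ built from g2' never exceeds the SDT achievable rate built from g2, so replacing the rate constraint by the surrogate constraint cannot violate the original rate constraint. -/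
open MeasureTheory

lemma aux_integrable_exp (a c1 c2 : ℝ) (ha : 0 < a) :
    Integrable (fun y : ℝ => Real.exp (-a * y ^ 2 + c1 * |y| + c2)) := by
  have hmeas : Continuous fun y : ℝ => Real.exp (-a * y ^ 2 + c1 * |y| + c2) := by
    fun_prop
  set d := c1 / (2 * a) with hd
  have hg : Integrable (fun y : ℝ =>
      Real.exp (c2 + a * d ^ 2) * (Real.exp (-a * (y - d) ^ 2) + Real.exp (-a * (y - (-d)) ^ 2))) := by
    exact (((integrable_exp_neg_mul_sq ha).comp_sub_right d).add
      ((integrable_exp_neg_mul_sq ha).comp_sub_right (-d))).const_mul _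
  refine hg.mono' hmeas.aestronglyMeasurable (Filter.Eventually.of_forall fun y => ?_)
  rw [Real.norm_eq_abs, abs_of_nonneg (Real.exp_nonneg _)]
  have ha' : a ≠ 0 := ne_of_gt ha
  rcases le_or_gt 0 y with hy | hy
  · have h1 : -a * y ^ 2 + c1 * |y| + c2 = (c2 + a * d ^ 2) + (-a * (y - d) ^ 2) := by
      rw [abs_of_nonneg hy, hd]; field_simp; ring
    rw [h1, Real.exp_add]
    have h2 : (0:ℝ) ≤ Real.exp (c2 + a * d ^ 2) := Real.exp_nonneg _
    nlinarith [Real.exp_nonneg (-a * (y - (-d)) ^ 2)]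
  · have h1 : -a * y ^ 2 + c1 * |y| + c2 = (c2 + a * d ^ 2) + (-a * (y - (-d)) ^ 2) := by
      rw [abs_of_neg hy, hd]; field_simp; ring
    rw [h1, Real.exp_add]
    have h2 : (0:ℝ) ≤ Real.exp (c2 + a * d ^ 2) := Real.exp_nonneg _
    nlinarith [Real.exp_nonneg (-a * (y - d) ^ 2)]

lemma aux_gibbs (S : Finset ℕ) (u v : ℕ → ℝ → ℝ)
    (hu : ∀ i ∈ S, ∀ y, 0 < u i y) (hv : ∀ i ∈ S, ∀ y, 0 < v i y)
    (hui : ∀ i ∈ S, Integrable (u i)) (hvi : ∀ i ∈ S, Integrable (v i))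
    (hli : ∀ i ∈ S, Integrable (fun y => u i y * Real.logb 2 (u i y / v i y)))
    (hsum : ∑ i ∈ S, ∫ y, v i y = ∑ i ∈ S, ∫ y, u i y) :
    0 ≤ ∑ i ∈ S, ∫ y, u i y * Real.logb 2 (u i y / v i y) := by
  have hlog2 : (0:ℝ) < Real.log 2 := Real.log_pos one_lt_two
  have key : ∀ i ∈ S, ∫ y, (u i y - v i y) / Real.log 2
      ≤ ∫ y, u i y * Real.logb 2 (u i y / v i y) := by
    intro i hi
    refine integral_mono (((hui i hi).sub (hvi i hi)).div_const _) (hli i hi) fun y => ?_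
    have huy := hu i hi y
    have hvy := hv i hi y
    have h1 := Real.log_le_sub_one_of_pos (div_pos hvy huy)
    have h2 : u i y * Real.logb 2 (u i y / v i y)
        = u i y * (Real.log (u i y) - Real.log (v i y)) / Real.log 2 := by
      rw [Real.logb, Real.log_div huy.ne' hvy.ne']; ring
    rw [h2]
    gcongr
    rw [Real.log_div hvy.ne' huy.ne'] at h1
    have h3 : v i y / u i y * u i y = v i y := div_mul_cancel₀ _ huy.ne'
    nlinarith
  have step2 : ∀ i ∈ S, ∫ y, (u i y - v i y) / Real.log 2
      = ((∫ y, u i y) - ∫ y, v i y) / Real.log 2 := by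
    intro i hi
    rw [integral_div, integral_sub (hui i hi) (hvi i hi)]
  calc (0:ℝ) = ((∑ i ∈ S, ∫ y, u i y) - ∑ i ∈ S, ∫ y, v i y) / Real.log 2 := by
        rw [hsum]; simp
    _ = ∑ i ∈ S, ((∫ y, u i y) - ∫ y, v i y) / Real.log 2 := by
        rw [← Finset.sum_sub_distrib, Finset.sum_div]
    _ = ∑ i ∈ S, ∫ y, (u i y - v i y) / Real.log 2 := by
        exact Finset.sum_congr rfl fun i hi => (step2 i hi).symm
    _ ≤ _ := Finset.sum_le_sum key

set_option maxHeartbeats 1000000 in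
/-- **Surrogate domination.** `g₂'(p, p̂) ≥ g₂(p)`: the surrogate function `Φ` built from
`g₂'` never exceeds the SDT achievable rate built from `g₂`, so replacing the rate
constraint by the surrogate constraint cannot violate the original rate constraint. -/
theorem surrogate_dominates
    (M : ℕ) (hM : 1 ≤ M) (σ h α Δ : ℝ)
    (hσ : 0 < σ) (hh : 0 < h) (hα : 0 < α) (hΔ : 0 < Δ)
    (K : ℕ) (hK : 1 ≤ K) (w b : ℕ → ℝ)
    (hw : ∀ k ∈ Finset.Icc 1 K, 0 ≤ w k)
    (hwsum : ∑ k ∈ Finset.Icc 1 K, w k = 1)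
    (p phat : ℕ → ℝ)
    (hp : ∀ i ∈ Finset.Icc 1 M, 0 < p i)
    (hpsum : ∑ i ∈ Finset.Icc 1 M, p i = 1)
    (hphat : ∀ i ∈ Finset.Icc 1 M, 0 < phat i)
    (hphatsum : ∑ i ∈ Finset.Icc 1 M, phat i = 1)
    (f : ℕ → ℝ → ℝ) (hf : f = condDensity σ h α Δ K w b) :
    g2Fun M f p p ≤ g2Fun M f p phat := by
  set S := Finset.Icc 1 M with hS
  set T := Finset.Icc 1 K with hT
  set c : ℝ := (2 * Real.pi * σ ^ 2) ^ (-(1 / 2 : ℝ)) with hcdef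
  have h2πσ : (0:ℝ) < 2 * Real.pi * σ ^ 2 := by positivity
  have hc : 0 < c := Real.rpow_pos_of_pos h2πσ _
  have h2σ : (0:ℝ) < 2 * σ ^ 2 := by positivity
  -- a positive weight exists
  obtain ⟨k0, hk0T, hk0⟩ : ∃ k ∈ T, 0 < w k := by
    by_contra hcon
    push_neg at hcon
    have h0 : ∑ k ∈ T, w k = 0 :=
      Finset.sum_eq_zero fun k hk => le_antisymm (hcon k hk) (hw k hk)
    rw [hwsum] at h0; linarith
  -- global bound on the means
  set B : ℝ := ∑ i ∈ S, ∑ k ∈ T, |h * α * Δ * (i:ℝ) + b k| with hBdef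
  have hB : ∀ i ∈ S, ∀ k ∈ T, |h * α * Δ * (i:ℝ) + b k| ≤ B := by
    intro i hi k hk
    calc |h * α * Δ * (i:ℝ) + b k| ≤ ∑ k ∈ T, |h * α * Δ * (i:ℝ) + b k| :=
          Finset.single_le_sum (f := fun k => |h * α * Δ * (i:ℝ) + b k|)
            (fun k _ => abs_nonneg _) hk
      _ ≤ B := by
          rw [hBdef]
          exact Finset.single_le_sum (s := S) (f := fun i : ℕ => ∑ k ∈ T, |h * α * Δ * (i:ℝ) + b k|)
            (fun i _ => Finset.sum_nonneg fun k _ => abs_nonneg _) hi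
  have h1S : (1:ℕ) ∈ S := Finset.mem_Icc.mpr ⟨le_refl 1, hM⟩
  have hB0 : 0 ≤ B := le_trans (abs_nonneg _) (hB 1 h1S k0 hk0T)
  subst hf
  set F := condDensity σ h α Δ K w b with hF
  set Glo : ℝ → ℝ := fun y => Real.exp (-(y^2 + 2*B * |y| + B^2)/(2*σ^2)) with hGlodef
  set Ghi : ℝ → ℝ := fun y => Real.exp (-(y^2 - 2*B * |y|)/(2*σ^2)) with hGhidef
  set R : ℝ → ℝ := fun y => (w k0)⁻¹ * Real.exp ((4*B * |y| + B^2)/(2*σ^2)) with hRdef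
  have hGhipos : ∀ y, 0 < Ghi y := fun y => Real.exp_pos _
  have hGlopos : ∀ y, 0 < Glo y := fun y => Real.exp_pos _
  have hRpos : ∀ y, 0 < R y := fun y => by
    rw [hRdef]; positivity
  have hFty : ∀ i y, F i y
      = ∑ k ∈ T, w k * c * Real.exp (-(y - h*α*Δ*(i:ℝ) - b k)^2 / (2*σ^2)) := fun i y => rfl
  -- pointwise Gaussian-kernel bounds
  have hEb : ∀ i ∈ S, ∀ k ∈ T, ∀ y : ℝ,
      Glo y ≤ Real.exp (-(y - h*α*Δ*(i:ℝ) - b k)^2 / (2*σ^2)) ∧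
      Real.exp (-(y - h*α*Δ*(i:ℝ) - b k)^2 / (2*σ^2)) ≤ Ghi y := by
    intro i hi k hk y
    obtain ⟨hm1, hm2⟩ := abs_le.mp (hB i hi k hk)
    have hmy : |(h*α*Δ*(i:ℝ) + b k) * y| ≤ B * |y| :=
      (abs_mul _ _).le.trans (mul_le_mul_of_nonneg_right (hB i hi k hk) (abs_nonneg y))
    obtain ⟨hmy1, hmy2⟩ := abs_le.mp hmy
    have hsqy : y^2 = |y|^2 := (sq_abs y).symm
    constructor
    · simp only [hGlodef]
      apply Real.exp_le_exp.mpr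
      refine div_le_div_of_nonneg_right ?_ h2σ.le
      nlinarith
    · simp only [hGhidef]
      apply Real.exp_le_exp.mpr
      refine div_le_div_of_nonneg_right ?_ h2σ.le
      nlinarith
  -- bounds on the conditional densities
  have hfub : ∀ i ∈ S, ∀ y, F i y ≤ c * Ghi y := by
    intro i hi y
    rw [hFty]
    calc ∑ k ∈ T, w k * c * Real.exp (-(y - h*α*Δ*(i:ℝ) - b k)^2 / (2*σ^2))
        ≤ ∑ k ∈ T, w k * (c * Ghi y) := by
          refine Finset.sum_le_sum fun k hk => ?_
          rw [mul_assoc]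
          exact mul_le_mul_of_nonneg_left
            (mul_le_mul_of_nonneg_left (hEb i hi k hk y).2 hc.le) (hw k hk)
      _ = c * Ghi y := by rw [← Finset.sum_mul, hwsum, one_mul]
  have hflb : ∀ i ∈ S, ∀ y, c * (w k0 * Glo y) ≤ F i y := by
    intro i hi y
    rw [hFty]
    calc c * (w k0 * Glo y) = w k0 * c * Glo y := by ring
      _ ≤ w k0 * c * Real.exp (-(y - h*α*Δ*(i:ℝ) - b k0)^2 / (2*σ^2)) :=
          mul_le_mul_of_nonneg_left (hEb i hi k0 hk0T y).1 (by positivity)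
      _ ≤ _ := Finset.single_le_sum
            (f := fun k => w k * c * Real.exp (-(y - h*α*Δ*(i:ℝ) - b k)^2 / (2*σ^2)))
            (fun k hk => by have := hw k hk; positivity) hk0T
  have hFpos : ∀ i ∈ S, ∀ y, 0 < F i y := by
    intro i hi y
    refine lt_of_lt_of_le ?_ (hflb i hi y)
    have := hGlopos y
    positivity
  have hRF : ∀ i ∈ S, ∀ j ∈ S, ∀ y, F i y ≤ R y * F j y := by
    intro i hi j hj y
    have hmid : R y * (c * (w k0 * Glo y)) = c * Ghi y := by
      simp only [hRdef, hGlodef, hGhidef]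
      rw [show (w k0)⁻¹ * Real.exp ((4*B * |y| + B^2)/(2*σ^2)) * (c * (w k0 *
          Real.exp (-(y^2 + 2*B * |y| + B^2)/(2*σ^2))))
        = ((w k0)⁻¹ * w k0) * c * (Real.exp ((4*B * |y| + B^2)/(2*σ^2)) *
          Real.exp (-(y^2 + 2*B * |y| + B^2)/(2*σ^2))) from by ring]
      rw [inv_mul_cancel₀ hk0.ne', ← Real.exp_add, one_mul]
      congr 1
      field_simp
      ring
    calc F i y ≤ c * Ghi y := hfub i hi y
      _ = R y * (c * (w k0 * Glo y)) := hmid.symm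
      _ ≤ R y * F j y := mul_le_mul_of_nonneg_left (hflb j hj y) (hRpos y).le
  -- bounds on the output mixture
  have homl : ∀ (q : ℕ → ℝ), (∀ i ∈ S, 0 < q i) → (∑ i ∈ S, q i = 1) → ∀ i ∈ S, ∀ y,
      q i * F i y ≤ outMix M F q y ∧ outMix M F q y ≤ R y * F i y := by
    intro q hq hqs i hi y
    constructor
    · exact Finset.single_le_sum (f := fun j => q j * F j y)
        (fun j hj => mul_nonneg (hq j hj).le (hFpos j hj y).le) hi
    · calc outMix M F q y = ∑ j ∈ S, q j * F j y := rfl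
        _ ≤ ∑ j ∈ S, q j * (R y * F i y) := Finset.sum_le_sum fun j hj =>
            mul_le_mul_of_nonneg_left (hRF j hj i hi y) (hq j hj).le
        _ = R y * F i y := by rw [← Finset.sum_mul, hqs, one_mul]
  have hmixpos : ∀ (q : ℕ → ℝ), (∀ i ∈ S, 0 < q i) → (∑ i ∈ S, q i = 1) → ∀ y,
      0 < outMix M F q y := by
    intro q hq hqs y
    exact lt_of_lt_of_le (mul_pos (hq 1 h1S) (hFpos 1 h1S y)) (homl q hq hqs 1 h1S y).1
  -- continuity
  have hFcont : ∀ i, Continuous (F i) := by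
    intro i
    have : F i = fun y => ∑ k ∈ T, w k * c * Real.exp (-(y - h*α*Δ*(i:ℝ) - b k)^2 / (2*σ^2)) :=
      funext fun y => hFty i y
    rw [this]
    exact continuous_finset_sum _ fun k _ => by fun_prop
  have houtcont : ∀ q : ℕ → ℝ, Continuous (fun y => outMix M F q y) := by
    intro q
    have : (fun y => outMix M F q y) = fun y => ∑ j ∈ S, q j * F j y := rfl
    rw [this]
    exact continuous_finset_sum _ fun j _ => continuous_const.mul (hFcont j)
  -- Gaussian integrals
  have hginti : ∀ m : ℝ, Integrable (fun y : ℝ => Real.exp (-(y - m)^2 / (2*σ^2))) := by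
    intro m
    have h1 : (fun y : ℝ => Real.exp (-(y - m)^2 / (2*σ^2)))
        = fun t => Real.exp (-(2*σ^2)⁻¹ * (t - m)^2) := by
      funext y; congr 1; field_simp
    rw [h1]
    exact (integrable_exp_neg_mul_sq (by positivity)).comp_sub_right m
  have hgval : ∀ m : ℝ, ∫ y : ℝ, Real.exp (-(y - m)^2 / (2*σ^2)) = Real.sqrt (2*Real.pi*σ^2) := by
    intro m
    have h1 : (fun y : ℝ => Real.exp (-(y - m)^2 / (2*σ^2)))
        = fun t => Real.exp (-(2*σ^2)⁻¹ * (t - m)^2) := by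
      funext y; congr 1; field_simp
    rw [h1, integral_sub_right_eq_self (fun t => Real.exp (-(2*σ^2)⁻¹ * t^2)) m,
      integral_gaussian]
    rw [show Real.pi / (2*σ^2)⁻¹ = 2*Real.pi*σ^2 from by field_simp]
  have hcsqrt : c * Real.sqrt (2*Real.pi*σ^2) = 1 := by
    rw [hcdef, Real.rpow_neg h2πσ.le, Real.sqrt_eq_rpow]
    exact inv_mul_cancel₀ (ne_of_gt (Real.rpow_pos_of_pos h2πσ _))
  have hFint : ∀ i, Integrable (F i) := by
    intro i
    have : F i = fun y => ∑ k ∈ T, w k * c * Real.exp (-(y - h*α*Δ*(i:ℝ) - b k)^2 / (2*σ^2)) :=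
      funext fun y => hFty i y
    rw [this]
    refine integrable_finset_sum _ fun k _ => ?_
    have h1 : (fun y : ℝ => w k * c * Real.exp (-(y - h*α*Δ*(i:ℝ) - b k)^2 / (2*σ^2)))
        = fun y => (w k * c) * Real.exp (-(y - (h*α*Δ*(i:ℝ) + b k))^2 / (2*σ^2)) := by
      funext y; ring_nf
    rw [h1]
    exact (hginti _).const_mul _
  have hFone : ∀ i, ∫ y : ℝ, F i y = 1 := by
    intro i
    have h0 : (fun y : ℝ => F i y)
        = fun y => ∑ k ∈ T, (w k * c) * Real.exp (-(y - (h*α*Δ*(i:ℝ) + b k))^2 / (2*σ^2)) := by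
      funext y
      rw [hFty]
      exact Finset.sum_congr rfl fun k _ => by ring_nf
    rw [h0, integral_finset_sum _ fun k _ => (hginti _).const_mul _]
    have : ∀ k ∈ T, (∫ y : ℝ, (w k * c) * Real.exp (-(y - (h*α*Δ*(i:ℝ) + b k))^2 / (2*σ^2)))
        = w k * (c * Real.sqrt (2*Real.pi*σ^2)) := by
      intro k _
      rw [integral_const_mul, hgval]
      ring
    rw [Finset.sum_congr rfl this]
    rw [← Finset.sum_mul, hwsum, hcsqrt, one_mul]
  -- master integrability criteria
  have hdom : ∀ (c1 c2 : ℝ) (g : ℝ → ℝ), Continuous g →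
      (∀ y, |g y| ≤ Real.exp (-(2*σ^2)⁻¹ * y^2 + c1 * |y| + c2)) → Integrable g := by
    intro c1 c2 g hg hb
    exact (aux_integrable_exp ((2*σ^2)⁻¹) c1 c2 (by positivity)).mono' hg.aestronglyMeasurable
      (Filter.Eventually.of_forall fun y => by rw [Real.norm_eq_abs]; exact hb y)
  have hdom2 : ∀ (K1 C1 C2 : ℝ) (g : ℝ → ℝ), Continuous g →
      (∀ y, |g y| ≤ K1 * Ghi y * (C1 + C2 * |y|)) → Integrable g := by
    intro K1 C1 C2 g hg hb
    set D := |K1| * (|C1| + |C2|) with hD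
    have hD0 : 0 ≤ D := by positivity
    apply hdom (B/σ^2 + 1) (Real.log (D + 1)) g hg
    intro y
    have hGpos := hGhipos y
    have hy1 : 1 ≤ Real.exp |y| := Real.one_le_exp (abs_nonneg y)
    have hy2 : |y| ≤ Real.exp |y| := by linarith [Real.add_one_le_exp |y|]
    have h2 : K1 * Ghi y * (C1 + C2 * |y|) ≤ |K1| * Ghi y * (|C1| + |C2| * |y|) := by
      have h2a : K1 * Ghi y * (C1 + C2 * |y|) ≤ abs (K1 * Ghi y * (C1 + C2 * |y|)) := le_abs_self _
      rw [abs_mul, abs_mul, abs_of_pos hGpos] at h2a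
      refine h2a.trans ?_
      have h2b : abs (C1 + C2 * |y|) ≤ |C1| + |C2| * |y| := by
        refine (abs_add_le _ _).trans ?_
        rw [abs_mul, abs_abs]
      have : 0 ≤ |K1| * Ghi y := by positivity
      exact mul_le_mul_of_nonneg_left h2b this
    have h3 : |C1| + |C2| * |y| ≤ (|C1|+|C2|) * Real.exp |y| := by
      nlinarith [abs_nonneg C1, abs_nonneg C2]
    have h4 : |g y| ≤ (D + 1) * (Ghi y * Real.exp |y|) := by
      have h5 : |K1| * Ghi y * (|C1| + |C2| * |y|) ≤ |K1| * Ghi y * ((|C1|+|C2|) * Real.exp |y|) :=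
        mul_le_mul_of_nonneg_left h3 (by positivity)
      have h6 := ((hb y).trans h2).trans h5
      have h7 : |K1| * Ghi y * ((|C1|+|C2|) * Real.exp |y|) = D * (Ghi y * Real.exp |y|) := by
        rw [hD]; ring
      rw [h7] at h6
      exact h6.trans (mul_le_mul_of_nonneg_right (by linarith)
        (mul_pos hGpos (Real.exp_pos _)).le)
    refine h4.trans (le_of_eq ?_)
    rw [show -(2*σ^2)⁻¹ * y^2 + (B/σ^2 + 1) * |y| + Real.log (D + 1)
        = (-(y^2 - 2*B * |y|)/(2*σ^2)) + |y| + Real.log (D + 1) from by field_simp; ring,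
      Real.exp_add, Real.exp_add, Real.exp_log (by positivity : (0:ℝ) < D + 1)]
    simp only [hGhidef]
    ring
  -- integrability of the log-integrands
  have hIlog : ∀ (q : ℕ → ℝ), (∀ i ∈ S, 0 < q i) → (∑ i ∈ S, q i = 1) → ∀ i ∈ S,
      Integrable (fun y => F i y * Real.logb 2 (outMix M F q y / (F i y * q i))) := by
    intro q hq hqs i hi
    have hFi0 : ∀ y, (0:ℝ) < F i y * q i := fun y => mul_pos (hFpos i hi y) (hq i hi)
    have hratpos : ∀ y, 0 < outMix M F q y / (F i y * q i) :=
      fun y => div_pos (hmixpos q hq hqs y) (hFi0 y)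
    apply hdom2 c ((Real.log (w k0)⁻¹ + B^2/(2*σ^2) - Real.log (q i)) / Real.log 2)
      ((2*B/σ^2) / Real.log 2)
    · have hcont1 : Continuous fun y => outMix M F q y / (F i y * q i) :=
        (houtcont q).div ((hFcont i).mul continuous_const) (fun y => (hFi0 y).ne')
      simp only [Real.logb]
      exact (hFcont i).mul ((hcont1.log fun y => (hratpos y).ne').div_const _)
    · intro y
      have hrat1 : 1 ≤ outMix M F q y / (F i y * q i) := by
        rw [le_div_iff₀ (hFi0 y), one_mul, mul_comm (F i y) (q i)]
        exact (homl q hq hqs i hi y).1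
      have hlog0 : 0 ≤ Real.logb 2 (outMix M F q y / (F i y * q i)) :=
        Real.logb_nonneg one_lt_two hrat1
      have hub : outMix M F q y / (F i y * q i) ≤ R y / q i := by
        calc outMix M F q y / (F i y * q i) ≤ (R y * F i y) / (F i y * q i) :=
              div_le_div_of_nonneg_right ((homl q hq hqs i hi y).2) (hFi0 y).le
          _ = R y / q i := by
              have hF0 : F i y ≠ 0 := (hFpos i hi y).ne'
              have hq0 : q i ≠ 0 := (hq i hi).ne'
              field_simp
      have hlogub : Real.logb 2 (outMix M F q y / (F i y * q i))
          ≤ (Real.log (w k0)⁻¹ + B^2/(2*σ^2) - Real.log (q i)) / Real.log 2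
            + (2*B/σ^2) / Real.log 2 * |y| := by
        calc Real.logb 2 (outMix M F q y / (F i y * q i))
            ≤ Real.logb 2 (R y / q i) :=
              Real.logb_le_logb_of_le one_lt_two (hratpos y) hub
          _ = (Real.log (R y) - Real.log (q i)) / Real.log 2 := by
              rw [Real.logb, Real.log_div (hRpos y).ne' (hq i hi).ne']
          _ = (Real.log (w k0)⁻¹ + (4*B * |y| + B^2)/(2*σ^2) - Real.log (q i)) / Real.log 2 := by
              congr 2
              simp only [hRdef]
              rw [Real.log_mul (inv_ne_zero hk0.ne') (Real.exp_ne_zero _), Real.log_exp]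
          _ = _ := by
              have hσ0 : σ ≠ 0 := hσ.ne'
              have hl2 : Real.log 2 ≠ 0 := (Real.log_pos one_lt_two).ne'
              field_simp
              ring
      rw [abs_of_nonneg (mul_nonneg (hFpos i hi y).le hlog0)]
      exact mul_le_mul (hfub i hi y) hlogub hlog0 (by have := hGhipos y; positivity)
  -- integrability of v
  have hIv : ∀ i ∈ S, Integrable (fun y =>
      phat i * F i y * (outMix M F p y / outMix M F phat y)) := by
    intro i hi
    apply hdom (3*B/σ^2) (B^2/(2*σ^2) + Real.log (c * (w k0)⁻¹))
    · exact (continuous_const.mul (hFcont i)).mul ((houtcont p).div (houtcont phat)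
        fun y => (hmixpos phat hphat hphatsum y).ne')
    · intro y
      have hFpos' := hFpos i hi y
      have hphi := hphat i hi
      have hop := hmixpos p hp hpsum y
      have hoph := hmixpos phat hphat hphatsum y
      have hv0 : 0 ≤ phat i * F i y * (outMix M F p y / outMix M F phat y) := by positivity
      rw [abs_of_nonneg hv0]
      have h1 : phat i * F i y ≤ outMix M F phat y := (homl phat hphat hphatsum i hi y).1
      have h2 : outMix M F p y / outMix M F phat y ≤ (R y * F i y) / (phat i * F i y) :=
        div_le_div₀ (by have := hRpos y; positivity) ((homl p hp hpsum i hi y).2)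
          (mul_pos hphi hFpos') h1
      have h3 : phat i * F i y * (outMix M F p y / outMix M F phat y)
          ≤ phat i * F i y * ((R y * F i y) / (phat i * F i y)) :=
        mul_le_mul_of_nonneg_left h2 (by positivity)
      have h4 : phat i * F i y * ((R y * F i y) / (phat i * F i y)) = R y * F i y := by
        rw [mul_comm (phat i * F i y)]
        exact div_mul_cancel₀ _ (mul_pos hphi hFpos').ne'
      have h5 : R y * F i y ≤ R y * (c * Ghi y) :=
        mul_le_mul_of_nonneg_left (hfub i hi y) (hRpos y).le
      have h6 : R y * (c * Ghi y) = Real.exp (-(2*σ^2)⁻¹ * y^2 + 3*B/σ^2 * |y|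
          + (B^2/(2*σ^2) + Real.log (c * (w k0)⁻¹))) := by
        simp only [hRdef, hGhidef]
        rw [show (w k0)⁻¹ * Real.exp ((4*B * |y| + B^2)/(2*σ^2))
              * (c * Real.exp (-(y^2 - 2*B * |y|)/(2*σ^2)))
            = (c * (w k0)⁻¹) * Real.exp ((4*B * |y| + B^2)/(2*σ^2)
              + -(y^2 - 2*B * |y|)/(2*σ^2)) from by rw [Real.exp_add]; ring]
        rw [← Real.exp_log (show (0:ℝ) < c * (w k0)⁻¹ by positivity), ← Real.exp_add]
        congr 1
        rw [Real.log_exp]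
        field_simp
        ring
      calc phat i * F i y * (outMix M F p y / outMix M F phat y)
          ≤ phat i * F i y * ((R y * F i y) / (phat i * F i y)) := h3
        _ = R y * F i y := h4
        _ ≤ R y * (c * Ghi y) := h5
        _ = _ := h6
  -- the Gibbs setup
  set u : ℕ → ℝ → ℝ := fun i y => p i * F i y with hudef
  set v : ℕ → ℝ → ℝ := fun i y =>
    phat i * F i y * (outMix M F p y / outMix M F phat y) with hvdef
  have hupos : ∀ i ∈ S, ∀ y, 0 < u i y := fun i hi y => mul_pos (hp i hi) (hFpos i hi y)
  have hvpos : ∀ i ∈ S, ∀ y, 0 < v i y := fun i hi y =>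
    mul_pos (mul_pos (hphat i hi) (hFpos i hi y))
      (div_pos (hmixpos p hp hpsum y) (hmixpos phat hphat hphatsum y))
  have hui : ∀ i ∈ S, Integrable (u i) := fun i hi => (hFint i).const_mul (p i)
  have hvi : ∀ i ∈ S, Integrable (v i) := fun i hi => hIv i hi
  have hkey : ∀ i ∈ S, ∀ y, u i y * Real.logb 2 (u i y / v i y)
      = p i * (F i y * Real.logb 2 (outMix M F phat y / (F i y * phat i))
             - F i y * Real.logb 2 (outMix M F p y / (F i y * p i))) := by
    intro i hi y
    have hF0 : F i y ≠ 0 := (hFpos i hi y).ne'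
    have hp0 : p i ≠ 0 := (hp i hi).ne'
    have hph0 : phat i ≠ 0 := (hphat i hi).ne'
    have hop : outMix M F p y ≠ 0 := (hmixpos p hp hpsum y).ne'
    have hoph : outMix M F phat y ≠ 0 := (hmixpos phat hphat hphatsum y).ne'
    have hA : outMix M F phat y / (F i y * phat i) ≠ 0 :=
      div_ne_zero hoph (mul_ne_zero hF0 hph0)
    have hB' : outMix M F p y / (F i y * p i) ≠ 0 :=
      div_ne_zero hop (mul_ne_zero hF0 hp0)
    have harg : u i y / v i y
        = (outMix M F phat y / (F i y * phat i)) / (outMix M F p y / (F i y * p i)) := by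
      simp only [hudef, hvdef]
      field_simp
    rw [harg, Real.logb_div hA hB']
    simp only [hudef]
    ring
  have hli : ∀ i ∈ S, Integrable (fun y => u i y * Real.logb 2 (u i y / v i y)) := by
    intro i hi
    have h1 := ((hIlog phat hphat hphatsum i hi).sub (hIlog p hp hpsum i hi)).const_mul (p i)
    exact h1.congr (Filter.Eventually.of_forall fun y => (hkey i hi y).symm)
  have hsumu : ∑ i ∈ S, ∫ y, u i y = 1 := by
    have h1 : ∀ i ∈ S, (∫ y, u i y) = p i := by
      intro i hi
      simp only [hudef]
      rw [integral_const_mul, hFone i, mul_one]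
    rw [Finset.sum_congr rfl h1, hpsum]
  have hsumv : ∑ i ∈ S, ∫ y, v i y = 1 := by
    have h1 : ∑ i ∈ S, ∫ y, v i y = ∫ y, ∑ i ∈ S, v i y :=
      (integral_finset_sum S fun i hi => hvi i hi).symm
    have h2 : ∀ y, ∑ i ∈ S, v i y = outMix M F p y := by
      intro y
      simp only [hvdef]
      rw [← Finset.sum_mul]
      have h2a : ∑ i ∈ S, phat i * F i y = outMix M F phat y := rfl
      rw [h2a, mul_comm, div_mul_cancel₀ _ (hmixpos phat hphat hphatsum y).ne']
    have h3 : ∫ y, ∑ i ∈ S, v i y = ∫ y, outMix M F p y := by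
      congr 1
      funext y
      exact h2 y
    have h4 : ∫ y : ℝ, outMix M F p y = 1 := by
      have h4a : (fun y : ℝ => outMix M F p y) = fun y => ∑ i ∈ S, p i * F i y := rfl
      rw [h4a, integral_finset_sum S fun i _ => (hFint i).const_mul (p i)]
      calc ∑ i ∈ S, ∫ y : ℝ, p i * F i y = ∑ i ∈ S, p i :=
            Finset.sum_congr rfl fun i _ => by rw [integral_const_mul, hFone, mul_one]
        _ = 1 := hpsum
    rw [h1, h3, h4]
  have hgibbs := aux_gibbs S u v hupos hvpos hui hvi hli (by rw [hsumv, hsumu])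
  have hrw : ∀ i ∈ S, (∫ y, u i y * Real.logb 2 (u i y / v i y))
      = p i * (∫ y, F i y * Real.logb 2 (outMix M F phat y / (F i y * phat i)))
        - p i * (∫ y, F i y * Real.logb 2 (outMix M F p y / (F i y * p i))) := by
    intro i hi
    calc (∫ y, u i y * Real.logb 2 (u i y / v i y))
        = ∫ y, p i * (F i y * Real.logb 2 (outMix M F phat y / (F i y * phat i))
             - F i y * Real.logb 2 (outMix M F p y / (F i y * p i))) := by
          congr 1
          funext y
          exact hkey i hi y
      _ = p i * ((∫ y, F i y * Real.logb 2 (outMix M F phat y / (F i y * phat i)))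
            - ∫ y, F i y * Real.logb 2 (outMix M F p y / (F i y * p i))) := by
          rw [integral_const_mul,
            integral_sub (hIlog phat hphat hphatsum i hi) (hIlog p hp hpsum i hi)]
      _ = _ := by ring
  simp only [g2Fun]
  rw [← hS, ← sub_nonneg, ← Finset.sum_sub_distrib]
  have hfinal : ∑ i ∈ S, ∫ y, u i y * Real.logb 2 (u i y / v i y)
      = ∑ i ∈ S, (p i * (∫ y, F i y * Real.logb 2 (outMix M F phat y / (F i y * phat i)))
        - p i * (∫ y, F i y * Real.logb 2 (outMix M F p y / (F i y * p i)))) :=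
    Finset.sum_congr rfl hrw
  exact le_of_le_of_eq hgibbs hfinal
end

section
/- Let p and p̂ be probability vectors on {1,…,M} with all entries strictly positive, and let the channel densities f_i and output mixtures f^p, f^{p̂} be as in the context. Define g2(p) = ∑_{i=1}^M p_i ∫ f_i(y)·log( f^p(y) / (f_i(y)·p_i) ) dy and g2'(p,p̂) = ∑_{i=1}^M p_i ∫ f_i(y)·log( f^{p̂}(y) / (f_i(y)·p̂_i) ) dy. If p ≠ p̂, then the inequality is strict: g2'(p,p̂) > g2(p). -/
open MeasureTheory

lemma aux_poly_gauss (A B s : ℝ) (hs : 0 < s) :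
    Integrable (fun y : ℝ => (A + B * y ^ 2) * Real.exp (-(y ^ 2) / s)) := by
  have hc : (0:ℝ) < 1 / s := by positivity
  have h1 : Integrable (fun y : ℝ => Real.exp (-(1/s) * y ^ 2)) := integrable_exp_neg_mul_sq hc
  have h2 : Integrable (fun y : ℝ => y ^ 2 * Real.exp (-(1/s) * y ^ 2)) := by
    have := integrable_rpow_mul_exp_neg_mul_sq hc (show (-1:ℝ) < 2 by norm_num)
    simpa [Real.rpow_two] using this
  have h3 := (h1.const_mul A).add (h2.const_mul B)
  have heq : (fun y : ℝ => (A + B * y ^ 2) * Real.exp (-(y ^ 2) / s)) =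
      fun y : ℝ => A * Real.exp (-(1/s) * y ^ 2) + B * (y ^ 2 * Real.exp (-(1/s) * y ^ 2)) := by
    funext y
    have : -(y ^ 2) / s = -(1/s) * y ^ 2 := by ring
    rw [this]; ring
  rw [heq]; exact h3

lemma aux_gibbs_term (x z : ℝ) (hx : 0 < x) (hz : 0 < z) :
    x - z ≤ x * Real.log (x / z) := by
  have h := Real.log_le_sub_one_of_pos (show 0 < z / x by positivity)
  have hlog : Real.log (x / z) = - Real.log (z / x) := by
    rw [Real.log_div hx.ne' hz.ne', Real.log_div hz.ne' hx.ne']; ring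
  have h2 := mul_le_mul_of_nonneg_left h hx.le
  rw [mul_sub, mul_one, mul_div_cancel₀ _ hx.ne'] at h2
  rw [hlog]; linarith

lemma aux_gibbs_term_strict (x z : ℝ) (hx : 0 < x) (hz : 0 < z) (hne : x ≠ z) :
    x - z < x * Real.log (x / z) := by
  have hne' : z / x ≠ 1 := by
    intro hc
    rw [div_eq_iff hx.ne', one_mul] at hc
    exact hne hc.symm
  have h := Real.log_lt_sub_one_of_pos (show 0 < z / x by positivity) hne'
  have hlog : Real.log (x / z) = - Real.log (z / x) := by
    rw [Real.log_div hx.ne' hz.ne', Real.log_div hz.ne' hx.ne']; ring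
  have h2 := mul_lt_mul_of_pos_left h hx
  rw [mul_sub, mul_one, mul_div_cancel₀ _ hx.ne'] at h2
  rw [hlog]; linarith

lemma aux_gibbs_sum (s : Finset ℕ) (x z : ℕ → ℝ) (hx : ∀ i ∈ s, 0 < x i)
    (hz : ∀ i ∈ s, 0 < z i) (hsum : ∑ i ∈ s, z i = ∑ i ∈ s, x i) :
    0 ≤ ∑ i ∈ s, x i * Real.log (x i / z i) := by
  have h : ∑ i ∈ s, (x i - z i) ≤ ∑ i ∈ s, x i * Real.log (x i / z i) :=
    Finset.sum_le_sum fun i hi => aux_gibbs_term _ _ (hx i hi) (hz i hi)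
  rw [Finset.sum_sub_distrib, hsum] at h; linarith

lemma aux_gibbs_sum_strict (s : Finset ℕ) (x z : ℕ → ℝ) (hx : ∀ i ∈ s, 0 < x i)
    (hz : ∀ i ∈ s, 0 < z i) (hsum : ∑ i ∈ s, z i = ∑ i ∈ s, x i)
    (j : ℕ) (hj : j ∈ s) (hnej : x j ≠ z j) :
    0 < ∑ i ∈ s, x i * Real.log (x i / z i) := by
  have h : ∑ i ∈ s, (x i - z i) < ∑ i ∈ s, x i * Real.log (x i / z i) :=
    Finset.sum_lt_sum (fun i hi => aux_gibbs_term _ _ (hx i hi) (hz i hi))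
      ⟨j, hj, aux_gibbs_term_strict _ _ (hx j hj) (hz j hj) hnej⟩
  rw [Finset.sum_sub_distrib, hsum] at h; linarith

lemma aux_log_abs_bound (t Cu D E : ℝ) (ht : 0 < t) (hCu : 0 < Cu) (hD : 0 < D) (hE : 0 ≤ E)
    (hup : t ≤ Cu) (hlo : D * Real.exp (-E) ≤ t) :
    |Real.log t| ≤ |Real.log Cu| + |Real.log D| + E := by
  have h1 : Real.log t ≤ Real.log Cu := Real.log_le_log ht hup
  have h2 : Real.log D - E ≤ Real.log t := by
    have := Real.log_le_log (by positivity) hlo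
    rwa [Real.log_mul hD.ne' (Real.exp_ne_zero _), Real.log_exp] at this
  have ha := le_abs_self (Real.log Cu)
  have hb := neg_abs_le (Real.log D)
  have hc := abs_nonneg (Real.log Cu)
  have hd := abs_nonneg (Real.log D)
  rw [abs_le]; constructor <;> linarith

section CondLemmas
variable (σ h α Δ : ℝ) (hσ : 0 < σ) (K : ℕ) (w b : ℕ → ℝ)
  (hw : ∀ k ∈ Finset.Icc 1 K, 0 ≤ w k) (hwsum : ∑ k ∈ Finset.Icc 1 K, w k = 1)

include hσ in
lemma aux_C_pos : 0 < (2 * Real.pi * σ ^ 2) ^ (-(1 / 2 : ℝ)) :=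
  Real.rpow_pos_of_pos (by positivity) _

include hw hwsum in
lemma aux_exists_wpos : ∃ k ∈ Finset.Icc 1 K, 0 < w k := by
  by_contra hcon
  push_neg at hcon
  have : ∑ k ∈ Finset.Icc 1 K, w k = 0 :=
    Finset.sum_eq_zero fun k hk => le_antisymm (hcon k hk) (hw k hk)
  rw [this] at hwsum; norm_num at hwsum

include hσ hw hwsum in
lemma aux_cond_pos (i : ℕ) (y : ℝ) : 0 < condDensity σ h α Δ K w b i y := by
  obtain ⟨k0, hk0, hwk0⟩ := aux_exists_wpos K w hw hwsum
  have hC := aux_C_pos σ hσ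
  unfold condDensity
  refine Finset.sum_pos'
    (fun k hk => mul_nonneg (mul_nonneg (hw k hk) hC.le) (Real.exp_pos _).le)
    ⟨k0, hk0, mul_pos (mul_pos hwk0 hC) (Real.exp_pos _)⟩

include hσ hw hwsum in
lemma aux_cond_le (i : ℕ) (y : ℝ) :
    condDensity σ h α Δ K w b i y ≤ (2 * Real.pi * σ ^ 2) ^ (-(1 / 2 : ℝ)) := by
  have hC := aux_C_pos σ hσ
  unfold condDensity
  calc ∑ k ∈ Finset.Icc 1 K, w k * (2 * Real.pi * σ ^ 2) ^ (-(1 / 2 : ℝ)) *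
        Real.exp (-(y - h * α * Δ * (i : ℝ) - b k) ^ 2 / (2 * σ ^ 2))
      ≤ ∑ k ∈ Finset.Icc 1 K, w k * (2 * Real.pi * σ ^ 2) ^ (-(1 / 2 : ℝ)) := by
        refine Finset.sum_le_sum fun k hk => ?_
        have he : Real.exp (-(y - h * α * Δ * (i : ℝ) - b k) ^ 2 / (2 * σ ^ 2)) ≤ 1 := by
          rw [Real.exp_le_one_iff]
          exact div_nonpos_of_nonpos_of_nonneg (neg_nonpos.mpr (sq_nonneg _)) (by positivity)
        have h2 := mul_le_mul_of_nonneg_left he (mul_nonneg (hw k hk) hC.le)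
        rw [mul_one] at h2
        exact h2
    _ = (2 * Real.pi * σ ^ 2) ^ (-(1 / 2 : ℝ)) := by
        rw [← Finset.sum_mul, hwsum, one_mul]

include hσ hw hwsum in
lemma aux_cond_lower (i : ℕ) :
    ∃ D > 0, ∀ y : ℝ, D * Real.exp (-(y ^ 2) / σ ^ 2) ≤ condDensity σ h α Δ K w b i y := by
  obtain ⟨k0, hk0, hwk0⟩ := aux_exists_wpos K w hw hwsum
  have hC := aux_C_pos σ hσ
  have hs2 : (0:ℝ) < σ ^ 2 := by positivity
  set Cc : ℝ := (2 * Real.pi * σ ^ 2) ^ (-(1 / 2 : ℝ)) with hCc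
  set a : ℝ := h * α * Δ * (i : ℝ) + b k0 with ha
  refine ⟨w k0 * Cc * Real.exp (-(a ^ 2) / σ ^ 2), by positivity, fun y => ?_⟩
  have hterm : w k0 * Cc * Real.exp (-(y - h * α * Δ * (i : ℝ) - b k0) ^ 2 / (2 * σ ^ 2))
      ≤ condDensity σ h α Δ K w b i y := by
    unfold condDensity
    refine Finset.single_le_sum
      (f := fun k => w k * Cc * Real.exp (-(y - h * α * Δ * (i : ℝ) - b k) ^ 2 / (2 * σ ^ 2)))
      (fun k hk => mul_nonneg (mul_nonneg (hw k hk) hC.le) (Real.exp_pos _).le) hk0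
  refine le_trans ?_ hterm
  have harg : -(a ^ 2) / σ ^ 2 + -(y ^ 2) / σ ^ 2
      ≤ -(y - h * α * Δ * (i : ℝ) - b k0) ^ 2 / (2 * σ ^ 2) := by
    rw [← add_div, div_le_div_iff₀ (by positivity) (by positivity)]
    have hya : y - h * α * Δ * (i : ℝ) - b k0 = y - a := by rw [ha]; ring
    rw [hya]
    nlinarith [sq_nonneg (y + a), sq_nonneg σ]
  have h1 : w k0 * Cc * Real.exp (-(a ^ 2) / σ ^ 2) * Real.exp (-(y ^ 2) / σ ^ 2)
      = (w k0 * Cc) * Real.exp (-(a ^ 2) / σ ^ 2 + -(y ^ 2) / σ ^ 2) := by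
    rw [Real.exp_add]; ring
  rw [h1, mul_assoc, mul_assoc]
  exact mul_le_mul_of_nonneg_left
    (mul_le_mul_of_nonneg_left (Real.exp_le_exp.mpr harg) hC.le) hwk0.le

include hσ hw in
lemma aux_cond_upper_gauss (i : ℕ) :
    ∃ G : ℝ, 0 ≤ G ∧ ∀ y : ℝ,
      condDensity σ h α Δ K w b i y ≤ G * Real.exp (-(y ^ 2) / (4 * σ ^ 2)) := by
  have hC := aux_C_pos σ hσ
  have hs2 : (0:ℝ) < σ ^ 2 := by positivity
  set Cc : ℝ := (2 * Real.pi * σ ^ 2) ^ (-(1 / 2 : ℝ)) with hCc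
  refine ⟨∑ k ∈ Finset.Icc 1 K, w k * Cc *
      Real.exp ((h * α * Δ * (i : ℝ) + b k) ^ 2 / σ ^ 2), ?_, fun y => ?_⟩
  · refine Finset.sum_nonneg fun k hk => ?_
    exact mul_nonneg (mul_nonneg (hw k hk) hC.le) (Real.exp_pos _).le
  · unfold condDensity
    rw [Finset.sum_mul]
    refine Finset.sum_le_sum fun k hk => ?_
    have hwk := hw k hk
    set a : ℝ := h * α * Δ * (i : ℝ) + b k with ha
    have hya : y - h * α * Δ * (i : ℝ) - b k = y - a := by rw [ha]; ring
    have harg : -(y - a) ^ 2 / (2 * σ ^ 2) ≤ a ^ 2 / σ ^ 2 + -(y ^ 2) / (4 * σ ^ 2) := by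
      rw [div_add_div _ _ (by positivity) (by positivity),
        div_le_div_iff₀ (by positivity) (by positivity)]
      have key : 0 ≤ (σ ^ 2 * σ ^ 2) * ((y - 2 * a) ^ 2 + 2 * a ^ 2) := by positivity
      nlinarith [key]
    have h1 : w k * Cc * Real.exp (a ^ 2 / σ ^ 2) * Real.exp (-(y ^ 2) / (4 * σ ^ 2))
        = (w k * Cc) * Real.exp (a ^ 2 / σ ^ 2 + -(y ^ 2) / (4 * σ ^ 2)) := by
      rw [Real.exp_add]; ring
    rw [hya, h1]
    calc w k * Cc * Real.exp (-(y - a) ^ 2 / (2 * σ ^ 2))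
        ≤ (w k * Cc) * Real.exp (a ^ 2 / σ ^ 2 + -(y ^ 2) / (4 * σ ^ 2)) :=
          mul_le_mul_of_nonneg_left (Real.exp_le_exp.mpr harg)
            (mul_nonneg hwk hC.le)

lemma aux_cond_cont (i : ℕ) : Continuous (condDensity σ h α Δ K w b i) := by
  unfold condDensity
  refine continuous_finset_sum _ fun k _ => ?_
  fun_prop

end CondLemmas


-- continuity of the integrand
lemma aux_F_cont (fi g : ℝ → ℝ) (qi : ℝ) (hqi : 0 < qi)
    (hfic : Continuous fi) (hgc : Continuous g)
    (hfip : ∀ y, 0 < fi y) (hgp : ∀ y, 0 < g y) :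
    Continuous (fun y => fi y * Real.logb 2 (g y / (fi y * qi))) := by
  have harg : ∀ y, g y / (fi y * qi) ≠ 0 :=
    fun y => ne_of_gt (div_pos (hgp y) (mul_pos (hfip y) hqi))
  have hlog : Continuous (fun y => Real.log (g y / (fi y * qi))) :=
    Continuous.log (hgc.div (hfic.mul continuous_const)
      (fun y => ne_of_gt (mul_pos (hfip y) hqi))) harg
  have : (fun y => fi y * Real.logb 2 (g y / (fi y * qi)))
      = fun y => fi y * (Real.log (g y / (fi y * qi)) / Real.log 2) := rfl
  rw [this]
  exact hfic.mul (hlog.div_const _)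

lemma aux_poly_gauss' (A B s : ℝ) (hs : 0 < s) :
    Integrable (fun y : ℝ => (A + B * y ^ 2) * Real.exp (-(y ^ 2) / s)) := by
  have hc : (0:ℝ) < 1 / s := by positivity
  have h1 : Integrable (fun y : ℝ => Real.exp (-(1/s) * y ^ 2)) := integrable_exp_neg_mul_sq hc
  have h2 : Integrable (fun y : ℝ => y ^ 2 * Real.exp (-(1/s) * y ^ 2)) := by
    have := integrable_rpow_mul_exp_neg_mul_sq hc (show (-1:ℝ) < 2 by norm_num)
    simpa [Real.rpow_two] using this
  have h3 := (h1.const_mul A).add (h2.const_mul B)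
  have heq : (fun y : ℝ => (A + B * y ^ 2) * Real.exp (-(y ^ 2) / s)) =
      fun y : ℝ => A * Real.exp (-(1/s) * y ^ 2) + B * (y ^ 2 * Real.exp (-(1/s) * y ^ 2)) := by
    funext y
    have : -(y ^ 2) / s = -(1/s) * y ^ 2 := by ring
    rw [this]; ring
  rw [heq]; exact h3

lemma aux_log_abs_bound' (t Cu D E : ℝ) (ht : 0 < t) (hD : 0 < D) (hE : 0 ≤ E)
    (hup : t ≤ Cu) (hlo : D * Real.exp (-E) ≤ t) :
    |Real.log t| ≤ |Real.log Cu| + |Real.log D| + E := by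
  have h1 : Real.log t ≤ Real.log Cu := Real.log_le_log ht hup
  have h2 : Real.log D - E ≤ Real.log t := by
    have := Real.log_le_log (by positivity) hlo
    rwa [Real.log_mul hD.ne' (Real.exp_ne_zero _), Real.log_exp] at this
  have ha := le_abs_self (Real.log Cu)
  have hb := neg_abs_le (Real.log D)
  have hc := abs_nonneg (Real.log Cu)
  have hd := abs_nonneg (Real.log D)
  rw [abs_le]; constructor <;> linarith

lemma aux_key_integrable (σ : ℝ) (hσ : 0 < σ) (fi g : ℝ → ℝ) (qi : ℝ) (hqi : 0 < qi)
    (hfic : Continuous fi) (hgc : Continuous g)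
    (hfip : ∀ y, 0 < fi y) (hgp : ∀ y, 0 < g y)
    (Gi Cu Di Dg : ℝ) (hDi : 0 < Di) (hDg : 0 < Dg)
    (hfiup : ∀ y, fi y ≤ Gi * Real.exp (-(y ^ 2) / (4 * σ ^ 2)))
    (hfile : ∀ y, fi y ≤ Cu) (hgle : ∀ y, g y ≤ Cu)
    (hfilo : ∀ y, Di * Real.exp (-(y ^ 2) / σ ^ 2) ≤ fi y)
    (hglo : ∀ y, Dg * Real.exp (-(y ^ 2) / σ ^ 2) ≤ g y) :
    Integrable (fun y => fi y * Real.logb 2 (g y / (fi y * qi))) := by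
  have hs2 : (0:ℝ) < σ ^ 2 := by positivity
  have hL2 : 0 < Real.log 2 := Real.log_pos one_lt_two
  have hGi : 0 ≤ Gi := by
    have h0 := (hfip 0).le.trans (hfiup 0)
    nlinarith [Real.exp_pos (-((0:ℝ) ^ 2) / (4 * σ ^ 2))]
  set K0 : ℝ := |Real.log Cu| + |Real.log Dg| + (|Real.log Cu| + |Real.log Di|) + |Real.log qi|
    with hK0def
  have hK0 : 0 ≤ K0 := by positivity
  set A : ℝ := Gi * K0 / Real.log 2 with hA
  set B : ℝ := 2 * Gi / (σ ^ 2 * Real.log 2) with hB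
  have hbound : ∀ y : ℝ, ‖fi y * Real.logb 2 (g y / (fi y * qi))‖
      ≤ (A + B * y ^ 2) * Real.exp (-(y ^ 2) / (4 * σ ^ 2)) := by
    intro y
    have hfiy := hfip y
    have hgy := hgp y
    have hEy : (0:ℝ) ≤ y ^ 2 / σ ^ 2 := by positivity
    have hlg : |Real.log (g y)| ≤ |Real.log Cu| + |Real.log Dg| + y ^ 2 / σ ^ 2 := by
      refine aux_log_abs_bound' _ _ _ _ hgy hDg hEy (hgle y) ?_
      have : -(y ^ 2 / σ ^ 2) = -(y ^ 2) / σ ^ 2 := by ring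
      rw [this]; exact hglo y
    have hlf : |Real.log (fi y)| ≤ |Real.log Cu| + |Real.log Di| + y ^ 2 / σ ^ 2 := by
      refine aux_log_abs_bound' _ _ _ _ hfiy hDi hEy (hfile y) ?_
      have : -(y ^ 2 / σ ^ 2) = -(y ^ 2) / σ ^ 2 := by ring
      rw [this]; exact hfilo y
    have hsplit : Real.log (g y / (fi y * qi))
        = Real.log (g y) - Real.log (fi y) - Real.log qi := by
      rw [Real.log_div hgy.ne' (mul_pos hfiy hqi).ne', Real.log_mul hfiy.ne' hqi.ne']
      ring
    have habs : |Real.log (g y / (fi y * qi))| ≤ K0 + 2 * (y ^ 2 / σ ^ 2) := by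
      rw [hsplit, hK0def]
      calc |Real.log (g y) - Real.log (fi y) - Real.log qi|
          ≤ |Real.log (g y)| + |Real.log (fi y)| + |Real.log qi| := by
            exact (abs_sub _ _).trans (by gcongr; exact abs_sub _ _)
        _ ≤ _ := by linarith
    have hnorm : ‖fi y * Real.logb 2 (g y / (fi y * qi))‖
        = fi y * (|Real.log (g y / (fi y * qi))| / Real.log 2) := by
      rw [Real.norm_eq_abs, abs_mul, abs_of_pos hfiy]
      congr 1
      show |Real.log _ / Real.log 2| = _
      rw [abs_div, abs_of_pos hL2]
    rw [hnorm]
    have hstep : fi y * (|Real.log (g y / (fi y * qi))| / Real.log 2)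
        ≤ (Gi * Real.exp (-(y ^ 2) / (4 * σ ^ 2))) * ((K0 + 2 * (y ^ 2 / σ ^ 2)) / Real.log 2) := by
      refine mul_le_mul (hfiup y) ?_ (by positivity) ?_
      · exact (div_le_div_iff_of_pos_right hL2).mpr habs
      · positivity
    refine hstep.trans (le_of_eq ?_)
    rw [hA, hB]
    field_simp
  refine (aux_poly_gauss' A B (4 * σ ^ 2) (by positivity)).mono'
    ((aux_F_cont fi g qi hqi hfic hgc hfip hgp).aestronglyMeasurable) ?_
  filter_upwards with y using hbound y

/-- **Strict surrogate domination.** If `p ≠ p̂` (as probability vectors on `{1,…,M}`),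
then `g₂'(p, p̂) > g₂(p)`. -/
theorem surrogate_dominates_strict
    (M : ℕ) (hM : 1 ≤ M) (σ h α Δ : ℝ)
    (hσ : 0 < σ) (hh : 0 < h) (hα : 0 < α) (hΔ : 0 < Δ)
    (K : ℕ) (hK : 1 ≤ K) (w b : ℕ → ℝ)
    (hw : ∀ k ∈ Finset.Icc 1 K, 0 ≤ w k)
    (hwsum : ∑ k ∈ Finset.Icc 1 K, w k = 1)
    (p phat : ℕ → ℝ)
    (hp : ∀ i ∈ Finset.Icc 1 M, 0 < p i)
    (hpsum : ∑ i ∈ Finset.Icc 1 M, p i = 1)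
    (hphat : ∀ i ∈ Finset.Icc 1 M, 0 < phat i)
    (hphatsum : ∑ i ∈ Finset.Icc 1 M, phat i = 1)
    (hne : ∃ i ∈ Finset.Icc 1 M, p i ≠ phat i)
    (f : ℕ → ℝ → ℝ) (hf : f = condDensity σ h α Δ K w b) :
    g2Fun M f p p < g2Fun M f p phat := by
  have hL2 : 0 < Real.log 2 := Real.log_pos one_lt_two
  have h1M : 1 ∈ Finset.Icc 1 M := Finset.mem_Icc.mpr ⟨le_refl 1, hM⟩
  have hCpos : 0 < (2 * Real.pi * σ ^ 2) ^ (-(1 / 2 : ℝ)) := aux_C_pos σ hσ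
  have hfpos : ∀ i y, 0 < f i y := by
    rw [hf]; exact fun i y => aux_cond_pos σ h α Δ hσ K w b hw hwsum i y
  have hfcont : ∀ i, Continuous (f i) := by
    rw [hf]; exact fun i => aux_cond_cont σ h α Δ K w b i
  have hfle : ∀ i y, f i y ≤ (2 * Real.pi * σ ^ 2) ^ (-(1 / 2 : ℝ)) := by
    rw [hf]; exact fun i y => aux_cond_le σ h α Δ hσ K w b hw hwsum i y
  have hflower : ∀ i : ℕ, ∃ D > 0, ∀ y : ℝ,
      D * Real.exp (-(y ^ 2) / σ ^ 2) ≤ f i y := by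
    rw [hf]; exact fun i => aux_cond_lower σ h α Δ hσ K w b hw hwsum i
  have hfupper : ∀ i : ℕ, ∃ G : ℝ, 0 ≤ G ∧ ∀ y : ℝ,
      f i y ≤ G * Real.exp (-(y ^ 2) / (4 * σ ^ 2)) := by
    rw [hf]; exact fun i => aux_cond_upper_gauss σ h α Δ hσ K w b hw i
  clear hf
  -- facts about the output mixtures
  have hout : ∀ q : ℕ → ℝ, (∀ i ∈ Finset.Icc 1 M, 0 < q i) →
      (∑ i ∈ Finset.Icc 1 M, q i = 1) →
      (∀ y, 0 < outMix M f q y) ∧ Continuous (outMix M f q) ∧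
      (∀ y, outMix M f q y ≤ (2 * Real.pi * σ ^ 2) ^ (-(1 / 2 : ℝ))) ∧
      ∃ D > 0, ∀ y : ℝ, D * Real.exp (-(y ^ 2) / σ ^ 2) ≤ outMix M f q y := by
    intro q hq hqs
    obtain ⟨D1, hD1, hD1le⟩ := hflower 1
    refine ⟨fun y => ?_, ?_, fun y => ?_,
      ⟨q 1 * D1, mul_pos (hq 1 h1M) hD1, fun y => ?_⟩⟩
    · exact Finset.sum_pos (fun i hi => mul_pos (hq i hi) (hfpos i y)) ⟨1, h1M⟩
    · exact continuous_finset_sum _ fun i _ => continuous_const.mul (hfcont i)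
    · calc outMix M f q y
          ≤ ∑ i ∈ Finset.Icc 1 M, q i * (2 * Real.pi * σ ^ 2) ^ (-(1 / 2 : ℝ)) :=
            Finset.sum_le_sum fun i hi =>
              mul_le_mul_of_nonneg_left (hfle i y) (hq i hi).le
        _ = (2 * Real.pi * σ ^ 2) ^ (-(1 / 2 : ℝ)) := by
            rw [← Finset.sum_mul, hqs, one_mul]
    · calc q 1 * D1 * Real.exp (-(y ^ 2) / σ ^ 2)
          = q 1 * (D1 * Real.exp (-(y ^ 2) / σ ^ 2)) := by ring
        _ ≤ q 1 * f 1 y := mul_le_mul_of_nonneg_left (hD1le y) (hq 1 h1M).le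
        _ ≤ outMix M f q y := Finset.single_le_sum (f := fun i => q i * f i y)
            (fun i hi => mul_nonneg (hq i hi).le (hfpos i y).le) h1M
  obtain ⟨hop, hocP, holeP, DP, hDP, hDPle⟩ := hout p hp hpsum
  obtain ⟨hoh, hocH, holeH, DH, hDH, hDHle⟩ := hout phat hphat hphatsum
  -- integrability of integrands
  have hIntp : ∀ i ∈ Finset.Icc 1 M, Integrable
      (fun y => f i y * Real.logb 2 (outMix M f p y / (f i y * p i))) := by
    intro i hi
    obtain ⟨Gi, hGi, hGile⟩ := hfupper i
    obtain ⟨Di, hDi, hDile⟩ := hflower i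
    exact aux_key_integrable σ hσ (f i) (outMix M f p) (p i) (hp i hi)
      (hfcont i) hocP (hfpos i) hop Gi _ Di DP hDi hDP hGile
      (fun y => hfle i y) holeP hDile hDPle
  have hInth : ∀ i ∈ Finset.Icc 1 M, Integrable
      (fun y => f i y * Real.logb 2 (outMix M f phat y / (f i y * phat i))) := by
    intro i hi
    obtain ⟨Gi, hGi, hGile⟩ := hfupper i
    obtain ⟨Di, hDi, hDile⟩ := hflower i
    exact aux_key_integrable σ hσ (f i) (outMix M f phat) (phat i) (hphat i hi)
      (hfcont i) hocH (hfpos i) hoh Gi _ Di DH hDi hDH hGile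
      (fun y => hfle i y) holeH hDile hDHle
  -- the pointwise gap function
  set G : ℝ → ℝ := fun y => ∑ i ∈ Finset.Icc 1 M,
    p i * (f i y * Real.logb 2 (outMix M f phat y / (f i y * phat i))
         - f i y * Real.logb 2 (outMix M f p y / (f i y * p i))) with hGdef
  have hterm_int : ∀ i ∈ Finset.Icc 1 M, Integrable (fun y =>
      p i * (f i y * Real.logb 2 (outMix M f phat y / (f i y * phat i))
           - f i y * Real.logb 2 (outMix M f p y / (f i y * p i)))) :=
    fun i hi => ((hInth i hi).sub (hIntp i hi)).const_mul _
  have hGint : Integrable G := by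
    rw [hGdef]; exact integrable_finset_sum _ hterm_int
  have hGeq : ∫ y : ℝ, G y = g2Fun M f p phat - g2Fun M f p p := by
    rw [hGdef, integral_finset_sum _ hterm_int]
    unfold g2Fun
    rw [← Finset.sum_sub_distrib]
    refine Finset.sum_congr rfl fun i hi => ?_
    rw [MeasureTheory.integral_const_mul, integral_sub (hInth i hi) (hIntp i hi), mul_sub]
  -- pointwise rewriting as a relative entropy
  have hptwise : ∀ y : ℝ, G y = (∑ i ∈ Finset.Icc 1 M,
      (p i * f i y) * Real.log ((p i * f i y) /
        (phat i * f i y * (outMix M f p y / outMix M f phat y)))) / Real.log 2 := by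
    intro y
    rw [hGdef, Finset.sum_div]
    refine Finset.sum_congr rfl fun i hi => ?_
    have hfi := hfpos i y
    have hpi := hp i hi
    have hhi := hphat i hi
    have hopy := hop y
    have hohy := hoh y
    have e1 : Real.logb 2 (outMix M f phat y / (f i y * phat i))
        - Real.logb 2 (outMix M f p y / (f i y * p i))
        = Real.log ((p i * f i y) /
            (phat i * f i y * (outMix M f p y / outMix M f phat y))) / Real.log 2 := by
      show Real.log _ / Real.log 2 - Real.log _ / Real.log 2 = _
      rw [div_sub_div_same]
      congr 1
      rw [← Real.log_div (ne_of_gt (div_pos hohy (mul_pos hfi hhi)))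
        (ne_of_gt (div_pos hopy (mul_pos hfi hpi)))]
      congr 1
      field_simp
    calc p i * (f i y * Real.logb 2 (outMix M f phat y / (f i y * phat i))
            - f i y * Real.logb 2 (outMix M f p y / (f i y * p i)))
        = (p i * f i y) * (Real.logb 2 (outMix M f phat y / (f i y * phat i))
            - Real.logb 2 (outMix M f p y / (f i y * p i))) := by ring
      _ = (p i * f i y) * (Real.log ((p i * f i y) /
            (phat i * f i y * (outMix M f p y / outMix M f phat y))) / Real.log 2) := by
          rw [e1]
      _ = (p i * f i y) * Real.log ((p i * f i y) /
            (phat i * f i y * (outMix M f p y / outMix M f phat y))) / Real.log 2 := by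
          ring
  have hsums : ∀ y : ℝ, ∑ i ∈ Finset.Icc 1 M,
      phat i * f i y * (outMix M f p y / outMix M f phat y)
      = ∑ i ∈ Finset.Icc 1 M, p i * f i y := by
    intro y
    rw [← Finset.sum_mul]
    have h1 : ∑ i ∈ Finset.Icc 1 M, phat i * f i y = outMix M f phat y := rfl
    have h2 : ∑ i ∈ Finset.Icc 1 M, p i * f i y = outMix M f p y := rfl
    rw [h1, h2, mul_comm, div_mul_cancel₀ _ (hoh y).ne']
  have hGnonneg : ∀ y : ℝ, 0 ≤ G y := by
    intro y
    rw [hptwise y]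
    refine div_nonneg ?_ hL2.le
    exact aux_gibbs_sum (Finset.Icc 1 M) (fun i => p i * f i y)
      (fun i => phat i * f i y * (outMix M f p y / outMix M f phat y))
      (fun i hi => mul_pos (hp i hi) (hfpos i y))
      (fun i hi => mul_pos (mul_pos (hphat i hi) (hfpos i y)) (div_pos (hop y) (hoh y)))
      (hsums y)
  have hjex : ∃ j ∈ Finset.Icc 1 M, p j * f j 0
      ≠ phat j * f j 0 * (outMix M f p 0 / outMix M f phat 0) := by
    by_contra hcon
    push_neg at hcon
    have hpr : ∀ j ∈ Finset.Icc 1 M,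
        p j = phat j * (outMix M f p 0 / outMix M f phat 0) := by
      intro j hjm
      have h2 : p j * f j 0
          = (phat j * (outMix M f p 0 / outMix M f phat 0)) * f j 0 := by
        rw [hcon j hjm]; ring
      exact mul_right_cancel₀ (hfpos j 0).ne' h2
    have hr1 : (1:ℝ) = outMix M f p 0 / outMix M f phat 0 := by
      calc (1:ℝ) = ∑ j ∈ Finset.Icc 1 M, p j := hpsum.symm
        _ = ∑ j ∈ Finset.Icc 1 M, phat j * (outMix M f p 0 / outMix M f phat 0) :=
            Finset.sum_congr rfl hpr
        _ = (∑ j ∈ Finset.Icc 1 M, phat j) * (outMix M f p 0 / outMix M f phat 0) :=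
            (Finset.sum_mul _ _ _).symm
        _ = outMix M f p 0 / outMix M f phat 0 := by rw [hphatsum, one_mul]
    obtain ⟨j, hjm, hnej⟩ := hne
    exact hnej (by rw [hpr j hjm, ← hr1, mul_one])
  have hG0 : 0 < G 0 := by
    rw [hptwise 0]
    refine div_pos ?_ hL2
    obtain ⟨j, hjm, hnej⟩ := hjex
    exact aux_gibbs_sum_strict (Finset.Icc 1 M) (fun i => p i * f i 0)
      (fun i => phat i * f i 0 * (outMix M f p 0 / outMix M f phat 0))
      (fun i hi => mul_pos (hp i hi) (hfpos i 0))
      (fun i hi => mul_pos (mul_pos (hphat i hi) (hfpos i 0)) (div_pos (hop 0) (hoh 0)))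
      (hsums 0) j hjm hnej
  have hGcont : Continuous G := by
    rw [hGdef]
    refine continuous_finset_sum _ fun i hi => ?_
    exact continuous_const.mul
      ((aux_F_cont (f i) (outMix M f phat) (phat i) (hphat i hi)
          (hfcont i) hocH (hfpos i) hoh).sub
       (aux_F_cont (f i) (outMix M f p) (p i) (hp i hi)
          (hfcont i) hocP (hfpos i) hop))
  have hIpos : 0 < ∫ y : ℝ, G y := by
    rw [integral_pos_iff_support_of_nonneg (fun y => hGnonneg y) hGint]
    have hopen : IsOpen {y : ℝ | 0 < G y} := isOpen_lt continuous_const hGcont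
    have hsub : {y : ℝ | 0 < G y} ⊆ Function.support G := fun y hy => ne_of_gt hy
    calc (0 : ENNReal) < MeasureTheory.volume {y : ℝ | 0 < G y} :=
          hopen.measure_pos MeasureTheory.volume ⟨0, hG0⟩
      _ ≤ MeasureTheory.volume (Function.support G) := measure_mono hsub
  rw [hGeq] at hIpos
  linarith
end
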